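/- arXiv:2008.13276 — 6 statements merged into one kernel-verified Lean document; each statement's English description precedes it below -/
import Mathlib

section
/- Every outcome produced by an execution of Rule X satisfies extended justified representation up to one project: for every (α,T)-cohesive group of voters S there exists a voter i ∈ S such that u_i(W) ≥ Σ_{c∈T} α(c), or there exist i ∈ S and a candidate a ∈ C with u_i(W ∪ {a}) > Σ_{c∈T} α(c). -/
open Finset

section PBDefs

variable {V C : Type*} [Fintype V] [DecidableEq V] [Fintype C] [DecidableEq C]

/-- Total cost (as a real number) of a set of candidates. -/
def costOf (cost : C → ℚ) (T : Finset C) : ℝ := ∑ c ∈ T, (cost c : ℝ)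

/-- Total (additive) utility of voter `i` for a set of candidates. -/
def util (u : V → C → ℝ) (i : V) (T : Finset C) : ℝ := ∑ c ∈ T, u i c

/-- A set of candidates is feasible if its total cost is within the budget of 1. -/
def feasible (cost : C → ℚ) (W : Finset C) : Prop := costOf cost W ≤ 1

/-- The validity conditions of a PB election: positive costs, utilities in `[0,1]`,
and every candidate is assigned positive utility by some voter. -/
def validPB (cost : C → ℚ) (u : V → C → ℝ) : Prop :=
  (∀ c, 0 < cost c) ∧ (∀ i c, 0 ≤ u i c ∧ u i c ≤ 1) ∧ (∀ c, ∃ i, 0 < u i c)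

/-- Extended justified representation, up to one project: for every (α,T)-cohesive
(nonempty) group `S` of voters, some voter `i ∈ S` gets utility at least `∑ c ∈ T, α c`,
or some voter `i ∈ S` would exceed this utility after adding one more candidate. -/
def EJRupToOne (cost : C → ℚ) (u : V → C → ℝ) (W : Finset C) : Prop :=
  ∀ (α : C → ℝ) (S : Finset V) (T : Finset C),
    (∀ c, 0 ≤ α c ∧ α c ≤ 1) →
    S.Nonempty →
    costOf cost T * (Fintype.card V : ℝ) ≤ (S.card : ℝ) →
    (∀ i ∈ S, ∀ c ∈ T, α c ≤ u i c) →
    (∃ i ∈ S, (∑ c ∈ T, α c) ≤ util u i W) ∨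
      (∃ i ∈ S, ∃ a : C, (∑ c ∈ T, α c) < util u i (insert a W))

/-- Extended justified representation (exact version): for every (α,T)-cohesive
(nonempty) group `S` of voters, some voter `i ∈ S` gets utility at least `∑ c ∈ T, α c`. -/
def EJRexact (cost : C → ℚ) (u : V → C → ℝ) (W : Finset C) : Prop :=
  ∀ (α : C → ℝ) (S : Finset V) (T : Finset C),
    (∀ c, 0 ≤ α c ∧ α c ≤ 1) →
    S.Nonempty →
    costOf cost T * (Fintype.card V : ℝ) ≤ (S.card : ℝ) →
    (∀ i ∈ S, ∀ c ∈ T, α c ≤ u i c) →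
    ∃ i ∈ S, (∑ c ∈ T, α c) ≤ util u i W

/-- A (nonempty) group `S` of voters is weakly (β,T)-cohesive. -/
def weaklyCohesive (cost : C → ℚ) (u : V → C → ℝ) (β : ℝ) (S : Finset V) (T : Finset C) :
    Prop :=
  S.Nonempty ∧ costOf cost T * (Fintype.card V : ℝ) ≤ (S.card : ℝ) ∧
    ∀ i ∈ S, β ≤ util u i T

/-- Full justified representation. -/
def FJR (cost : C → ℚ) (u : V → C → ℝ) (W : Finset C) : Prop :=
  ∀ (β : ℝ) (S : Finset V) (T : Finset C),
    weaklyCohesive cost u β S T → ∃ i ∈ S, β ≤ util u i W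

/-- An outcome is exhaustive if no further candidate fits within the budget. -/
def exhaustive (cost : C → ℚ) (W : Finset C) : Prop :=
  ∀ c ∉ W, 1 < costOf cost (insert c W)

/-- The core: no nonempty group `S` of voters together with a set `T` of candidates
affordable with `S`'s share of the budget can block the outcome. -/
def inCore (cost : C → ℚ) (u : V → C → ℝ) (W : Finset C) : Prop :=
  ∀ (S : Finset V) (T : Finset C), S.Nonempty →
    costOf cost T * (Fintype.card V : ℝ) ≤ (S.card : ℝ) →
    ∃ i ∈ S, util u i T ≤ util u i W

/-- The multiplicative `a`-approximate core. -/
def inAlphaCore (cost : C → ℚ) (u : V → C → ℝ) (a : ℝ) (W : Finset C) : Prop :=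
  ∀ (S : Finset V) (T : Finset C), T.Nonempty →
    costOf cost T ≤ (S.card : ℝ) / (Fintype.card V : ℝ) →
    ∃ i ∈ S, ∃ c ∈ T, util u i T / a ≤ util u i (insert c W)

/-- The total amount paid so far by voter `i`, given per-candidate payments. -/
def totalPaid (pay : V → C → ℝ) (i : V) : ℝ := ∑ c, pay i c

/-- A candidate `c` is ρ-affordable given the payments made so far. -/
def affordable (cost : C → ℚ) (u : V → C → ℝ) (pay : V → C → ℝ) (ρ : ℝ) (c : C) : Prop :=
  ∑ i, min (1 / (Fintype.card V : ℝ) - totalPaid pay i) (u i c * ρ) = (cost c : ℝ)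

/-- One step of Rule X: add a candidate that is ρ-affordable for the minimum ρ ≥ 0,
and record the corresponding payments. -/
def RuleXStep (cost : C → ℚ) (u : V → C → ℝ) :
    (Finset C × (V → C → ℝ)) → (Finset C × (V → C → ℝ)) → Prop := fun s t =>
  ∃ c ∉ s.1, ∃ ρ : ℝ, 0 ≤ ρ ∧ affordable cost u s.2 ρ c ∧
    (∀ ρ' : ℝ, 0 ≤ ρ' → ∀ c' ∉ s.1, affordable cost u s.2 ρ' c' → ρ ≤ ρ') ∧
    t = (insert c s.1,
      fun i c' => if c' = c then
        min (1 / (Fintype.card V : ℝ) - totalPaid s.2 i) (u i c * ρ) else s.2 i c')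

/-- Rule X terminates when no remaining candidate is ρ-affordable for any ρ ≥ 0. -/
def RuleXTerminal (cost : C → ℚ) (u : V → C → ℝ) (s : Finset C × (V → C → ℝ)) : Prop :=
  ∀ ρ : ℝ, 0 ≤ ρ → ∀ c ∉ s.1, ¬ affordable cost u s.2 ρ c

/-- `W` is the output of some execution of Rule X. -/
def RuleXOutcome (cost : C → ℚ) (u : V → C → ℝ) (W : Finset C) : Prop :=
  ∃ pay : V → C → ℝ,
    Relation.ReflTransGen (RuleXStep cost u) (∅, fun _ _ => 0) (W, pay) ∧
      RuleXTerminal cost u (W, pay)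

/-- One step of the Greedy Cohesive Rule: a state consists of the current outcome,
the active voters and the active candidates.  The rule picks a weakly (β,T)-cohesive
group of active voters with β maximal, breaking ties in favor of smaller `cost T`. -/
def GCRStep (cost : C → ℚ) (u : V → C → ℝ) :
    (Finset C × Finset V × Finset C) → (Finset C × Finset V × Finset C) → Prop := fun s t =>
  ∃ (β : ℝ) (S : Finset V) (T : Finset C),
    0 < β ∧ S ⊆ s.2.1 ∧ T ⊆ s.2.2 ∧ weaklyCohesive cost u β S T ∧
    (∀ (β' : ℝ) (S' : Finset V) (T' : Finset C), 0 < β' → S' ⊆ s.2.1 → T' ⊆ s.2.2 →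
      weaklyCohesive cost u β' S' T' → β' ≤ β) ∧
    (∀ (S' : Finset V) (T' : Finset C), S' ⊆ s.2.1 → T' ⊆ s.2.2 →
      weaklyCohesive cost u β S' T' → costOf cost T ≤ costOf cost T') ∧
    t = (s.1 ∪ T, s.2.1 \ S, s.2.2 \ T)

/-- GCR terminates when no weakly cohesive group of active voters remains. -/
def GCRTerminal (cost : C → ℚ) (u : V → C → ℝ) (s : Finset C × Finset V × Finset C) : Prop :=
  ∀ (β : ℝ) (S : Finset V) (T : Finset C), 0 < β → S ⊆ s.2.1 → T ⊆ s.2.2 →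
    ¬ weaklyCohesive cost u β S T

/-- `W` is the output of some execution of the Greedy Cohesive Rule. -/
def GCROutcome (cost : C → ℚ) (u : V → C → ℝ) (W : Finset C) : Prop :=
  ∃ (AV : Finset V) (AC : Finset C),
    Relation.ReflTransGen (GCRStep cost u) (∅, Finset.univ, Finset.univ) (W, AV, AC) ∧
      GCRTerminal cost u (W, AV, AC)

/-- A price system `(b, p)` (with nonnegative payments) supports the outcome `W`:
conditions (C1)-(C5). -/
def supports (cost : C → ℚ) (u : V → C → ℝ) (b : ℝ) (p : V → C → ℝ) (W : Finset C) : Prop :=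
  1 ≤ b ∧ (∀ i c, 0 ≤ p i c) ∧
  (∀ i c, u i c = 0 → p i c = 0) ∧
  (∀ i, ∑ c, p i c ≤ b / (Fintype.card V : ℝ)) ∧
  (∀ c ∈ W, ∑ i, p i c = (cost c : ℝ)) ∧
  (∀ c ∉ W, ∑ i, p i c = 0) ∧
  (∀ c ∉ W, ∑ i ∈ Finset.univ.filter (fun i => 0 < u i c),
    (b / (Fintype.card V : ℝ) - ∑ c' ∈ W, p i c') ≤ (cost c : ℝ))

/-- An outcome is priceable if some price system supports it. -/
def priceable (cost : C → ℚ) (u : V → C → ℝ) (W : Finset C) : Prop :=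
  ∃ (b : ℝ) (p : V → C → ℝ), supports cost u b p W

/-- EJR for approval-based elections: every `T`-cohesive group contains a voter
with at least `|T|` approved candidates in `W`. -/
def approvalEJR (cost : C → ℚ) (A : V → Finset C) (W : Finset C) : Prop :=
  ∀ (S : Finset V) (T : Finset C), S.Nonempty →
    costOf cost T * (Fintype.card V : ℝ) ≤ (S.card : ℝ) →
    (∀ i ∈ S, T ⊆ A i) →
    ∃ i ∈ S, T.card ≤ (A i ∩ W).card

/-- The `t`-th harmonic number. -/
noncomputable def harm (t : ℕ) : ℝ := ∑ j ∈ Finset.range t, (1 : ℝ) / (j + 1)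

/-- The PAV score of an outcome. -/
noncomputable def PAVscore (A : V → Finset C) (W : Finset C) : ℝ := ∑ i, harm ((A i ∩ W).card)

end PBDefs

set_option linter.unusedSectionVars false
set_option linter.unusedVariables false
section Aux

variable {V C : Type*} [Fintype V] [DecidableEq V] [Fintype C] [DecidableEq C]

/-- monotonicity of the winner set along the execution -/
lemma rtg_mono (cost : C → ℚ) (u : V → C → ℝ) {a b : Finset C × (V → C → ℝ)}
    (h : Relation.ReflTransGen (RuleXStep cost u) a b) : a.1 ⊆ b.1 := by
  induction h with
  | refl => exact subset_rfl
  | tail hab hbc ih =>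
      obtain ⟨c, hc, ρ, hρ, haff, hmin, heq⟩ := hbc
      intro x hx
      rw [heq]
      exact Finset.mem_insert_of_mem (ih hx)

/-- IVT-based affordability lemma -/
lemma afford_of_floor (cost : C → ℚ) (u : V → C → ℝ) (p : V → C → ℝ) (c : C)
    (hcost : 0 < (cost c : ℝ))
    (hu : ∀ i, 0 ≤ u i c)
    (hl : ∀ i, 0 ≤ 1 / (Fintype.card V : ℝ) - totalPaid p i)
    (ρmax : ℝ) (h0 : 0 ≤ ρmax)
    (hf : (cost c : ℝ) ≤ ∑ i, min (1 / (Fintype.card V : ℝ) - totalPaid p i) (u i c * ρmax)) :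
    ∃ ρ : ℝ, 0 ≤ ρ ∧ ρ ≤ ρmax ∧ affordable cost u p ρ c := by
  set f : ℝ → ℝ := fun ρ => ∑ i, min (1 / (Fintype.card V : ℝ) - totalPaid p i) (u i c * ρ) with hfdef
  have hcont : Continuous f := by
    apply continuous_finset_sum
    intro i _
    exact Continuous.min continuous_const (continuous_const.mul continuous_id)
  have hf0 : f 0 = 0 := by
    simp only [hfdef, mul_zero]
    apply Finset.sum_eq_zero
    intro i _
    exact min_eq_right (hl i)
  have : (cost c : ℝ) ∈ Set.Icc (f 0) (f ρmax) := by
    constructor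
    · rw [hf0]; exact le_of_lt hcost
    · exact hf
  obtain ⟨ρ, hρmem, hρeq⟩ := intermediate_value_Icc h0 hcont.continuousOn this
  exact ⟨ρ, hρmem.1, hρmem.2, hρeq⟩

end Aux

section Aux2
variable {V C : Type*} [Fintype V] [DecidableEq V] [Fintype C] [DecidableEq C]

lemma afford_remaining (cost : C → ℚ) (u : V → C → ℝ) (S : Finset V) (α : C → ℝ)
    (p : V → C → ℝ) (c : C)
    (hcost : 0 < (cost c : ℝ))
    (hs : 0 < (S.card : ℝ))
    (hαc : 0 < α c)
    (hαu : ∀ j ∈ S, α c ≤ u j c)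
    (hu : ∀ i, 0 ≤ u i c)
    (hl : ∀ i, 0 ≤ 1 / (Fintype.card V : ℝ) - totalPaid p i)
    (hfloor : ∀ j ∈ S, (cost c : ℝ) / (S.card : ℝ) ≤ 1 / (Fintype.card V : ℝ) - totalPaid p j) :
    ∃ ρ : ℝ, 0 ≤ ρ ∧ ρ ≤ (cost c : ℝ) / ((S.card : ℝ) * α c) ∧ affordable cost u p ρ c := by
  set ρm : ℝ := (cost c : ℝ) / ((S.card : ℝ) * α c) with hρm
  have hρm0 : 0 ≤ ρm := by positivity
  have hkey : α c * ρm = (cost c : ℝ) / (S.card : ℝ) := by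
    rw [hρm]; field_simp
  apply afford_of_floor cost u p c hcost hu hl ρm hρm0
  calc (cost c : ℝ) = ∑ _j ∈ S, (cost c : ℝ) / (S.card : ℝ) := by
        rw [Finset.sum_const, nsmul_eq_mul]
        field_simp
    _ ≤ ∑ j ∈ S, min (1 / (Fintype.card V : ℝ) - totalPaid p j) (u j c * ρm) := by
        apply Finset.sum_le_sum
        intro j hj
        apply le_min (hfloor j hj)
        rw [← hkey]
        exact mul_le_mul_of_nonneg_right (hαu j hj) hρm0
    _ ≤ ∑ i, min (1 / (Fintype.card V : ℝ) - totalPaid p i) (u i c * ρm) := by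
        apply Finset.sum_le_sum_of_subset_of_nonneg (Finset.subset_univ S)
        intro i _ _
        exact le_min (hl i) (mul_nonneg (hu i) hρm0)

end Aux2

section Main
variable {V C : Type*} [Fintype V] [DecidableEq V] [Fintype C] [DecidableEq C]

/-- The execution invariant for the EJR-up-to-one proof. -/
def InvX (cost : C → ℚ) (u : V → C → ℝ) (S : Finset V) (T : Finset C) (α : C → ℝ)
    (X : Finset C) (p : V → C → ℝ) : Prop :=
  (∀ i c, 0 ≤ p i c) ∧
  (∀ i, totalPaid p i ≤ 1 / (Fintype.card V : ℝ)) ∧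
  (∀ i c, c ∉ X → p i c = 0) ∧
  (∀ j ∈ S, ∀ c ∈ T, c ∉ X → 0 < α c →
      (cost c : ℝ) / (S.card : ℝ) ≤ 1 / (Fintype.card V : ℝ) - totalPaid p j) ∧
  (∀ c ∈ X, ∃ ρ : ℝ, 0 ≤ ρ ∧ (∀ j ∈ S, p j c ≤ u j c * ρ) ∧
      (∀ c' ∈ T, c' ∉ X → 0 < α c' → ρ ≤ (cost c' : ℝ) / ((S.card : ℝ) * α c')) ∧
      (c ∈ T → α c * ρ ≤ (cost c : ℝ) / (S.card : ℝ)))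

lemma sum_ite_univ (f : C → ℝ) (a : C) (x : ℝ) :
    ∑ c, (if c = a then x else f c) = x - f a + ∑ c, f c := by
  have h : (fun c => if c = a then x else f c) = Function.update f a x := by
    funext c
    simp [Function.update_apply]
  rw [h, Finset.sum_update_of_mem (Finset.mem_univ a)]
  rw [Finset.sum_sdiff_eq_sub (Finset.singleton_subset_iff.mpr (Finset.mem_univ a)),
    Finset.sum_singleton]
  ring

end Main

section Step
variable {V C : Type*} [Fintype V] [DecidableEq V] [Fintype C] [DecidableEq C]

set_option maxHeartbeats 2000000 in
lemma inv_step (cost : C → ℚ) (u : V → C → ℝ) (S : Finset V) (T : Finset C) (α : C → ℝ)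
    (W : Finset C)
    (hcostpos : ∀ c, 0 < cost c)
    (hu01 : ∀ i c, 0 ≤ u i c ∧ u i c ≤ 1)
    (hα01 : ∀ c, 0 ≤ α c ∧ α c ≤ 1)
    (hs : 0 < (S.card : ℝ))
    (hn : 0 < (Fintype.card V : ℝ))
    (hcoh : costOf cost T * (Fintype.card V : ℝ) ≤ (S.card : ℝ))
    (hαu : ∀ i ∈ S, ∀ c ∈ T, α c ≤ u i c)
    (h2 : ∀ i ∈ S, ∀ a : C, util u i (insert a W) ≤ ∑ c ∈ T, α c)
    (cstar : C) (hcsT : cstar ∈ T) (hcsW : cstar ∉ W) (hcsα : 0 < α cstar)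
    (hcsmin : ∀ c ∈ T, c ∉ W → 0 < α c → (cost cstar : ℝ) / α cstar ≤ (cost c : ℝ) / α c)
    (X : Finset C) (p : V → C → ℝ) (st' : Finset C × (V → C → ℝ))
    (hInv : InvX cost u S T α X p)
    (hstep : RuleXStep cost u (X, p) st')
    (hsub : st'.1 ⊆ W) :
    InvX cost u S T α st'.1 st'.2 := by
  classical
  obtain ⟨hpos, htot, hzero, hok, hpp⟩ := hInv
  obtain ⟨ct, hct, ρt, hρt0, haff, hmin, heq⟩ := hstep
  simp only at hct
  set n : ℝ := (Fintype.card V : ℝ) with hndef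
  set s : ℝ := (S.card : ℝ) with hsdef
  -- basic facts
  have hl : ∀ i, 0 ≤ 1 / n - totalPaid p i := fun i => sub_nonneg.mpr (htot i)
  set m : V → ℝ := fun i => min (1 / n - totalPaid p i) (u i ct * ρt) with hmdef
  have hm0 : ∀ i, 0 ≤ m i := fun i => le_min (hl i) (mul_nonneg (hu01 i ct).1 hρt0)
  have hmle : ∀ i, m i ≤ 1 / n - totalPaid p i := fun i => min_le_left _ _
  have hmu : ∀ i, m i ≤ u i ct * ρt := fun i => min_le_right _ _
  have hst1 : st'.1 = insert ct X := by rw [heq]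
  have hst2 : st'.2 = fun i c' => if c' = ct then m i else p i c' := by rw [heq]
  have hXW : X ⊆ W := by
    intro x hx
    exact hsub (by rw [hst1]; exact Finset.mem_insert_of_mem hx)
  -- total paid after the step
  have htp' : ∀ i, totalPaid st'.2 i = m i + totalPaid p i := by
    intro i
    rw [hst2]
    show (∑ c, (if c = ct then m i else p i c)) = m i + totalPaid p i
    rw [sum_ite_univ (p i) ct (m i), hzero i ct hct]
    unfold totalPaid
    ring
  -- the rate of this step is bounded by every remaining candidate's affordability rate
  have hrate : ∀ c' ∈ T, c' ∉ X → 0 < α c' → ρt ≤ (cost c' : ℝ) / (s * α c') := by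
    intro c' hc'T hc'X hc'α
    obtain ⟨ρ', h0', hle', haff'⟩ :=
      afford_remaining cost u S α p c'
        (by exact_mod_cast hcostpos c') hs hc'α
        (fun j hj => hαu j hj c' hc'T) (fun i => (hu01 i c').1) hl
        (fun j hj => hok j hj c' hc'T hc'X hc'α)
    exact le_trans (hmin ρ' h0' c' hc'X haff') hle'
  -- payments for the new candidate
  have hp'new : ∀ i, st'.2 i ct = m i := by intro i; rw [hst2]; simp
  have hp'old : ∀ i c, c ≠ ct → st'.2 i c = p i c := by
    intro i c hc; rw [hst2]; simp [hc]
  -- (i1)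
  have hpos' : ∀ i c, 0 ≤ st'.2 i c := by
    intro i c
    by_cases h : c = ct
    · rw [h, hp'new]; exact hm0 i
    · rw [hp'old i c h]; exact hpos i c
  -- (i2)
  have htot' : ∀ i, totalPaid st'.2 i ≤ 1 / n := by
    intro i
    rw [htp' i]
    have := hmle i
    linarith
  -- (i3)
  have hzero' : ∀ i c, c ∉ st'.1 → st'.2 i c = 0 := by
    intro i c hc
    rw [hst1] at hc
    rw [Finset.mem_insert] at hc
    push_neg at hc
    rw [hp'old i c hc.1]
    exact hzero i c hc.2
  -- (pp)
  have hpp' : ∀ c ∈ st'.1, ∃ ρ : ℝ, 0 ≤ ρ ∧ (∀ j ∈ S, st'.2 j c ≤ u j c * ρ) ∧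
      (∀ c' ∈ T, c' ∉ st'.1 → 0 < α c' → ρ ≤ (cost c' : ℝ) / (s * α c')) ∧
      (c ∈ T → α c * ρ ≤ (cost c : ℝ) / s) := by
    intro c hc
    rw [hst1, Finset.mem_insert] at hc
    rcases hc with hcct | hcX
    · -- the new candidate
      subst hcct
      refine ⟨ρt, hρt0, ?_, ?_, ?_⟩
      · intro j _
        rw [hp'new]
        exact hmu j
      · intro c' hc'T hc'X' hc'α
        have hc'X : c' ∉ X := by
          intro h
          exact hc'X' (by rw [hst1]; exact Finset.mem_insert_of_mem h)
        exact hrate c' hc'T hc'X hc'α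
      · intro hcT
        rcases eq_or_lt_of_le (hα01 c).1 with h0 | h0
        · rw [← h0, zero_mul]
          exact div_nonneg (by exact_mod_cast (hcostpos c).le) hs.le
        · have hr := hrate c hcT hct h0
          have hkey : α c * ((cost c : ℝ) / (s * α c)) = (cost c : ℝ) / s := by
            field_simp
          calc α c * ρt ≤ α c * ((cost c : ℝ) / (s * α c)) :=
                mul_le_mul_of_nonneg_left hr (le_of_lt h0)
            _ = (cost c : ℝ) / s := hkey
    · -- old candidates
      obtain ⟨ρ, hρ0, hρpay, hρcond, hρpin⟩ := hpp c hcX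
      refine ⟨ρ, hρ0, ?_, ?_, hρpin⟩
      · intro j hj
        have hcne : c ≠ ct := fun h => hct (h ▸ hcX)
        rw [hp'old j c hcne]
        exact hρpay j hj
      · intro c' hc'T hc'X' hc'α
        have hc'X : c' ∉ X := by
          intro h
          exact hc'X' (by rw [hst1]; exact Finset.mem_insert_of_mem h)
        exact hρcond c' hc'T hc'X hc'α
  -- (ok) or the crossing contradiction
  by_cases hOK : ∀ j ∈ S, ∀ c ∈ T, c ∉ st'.1 → 0 < α c →
      (cost c : ℝ) / s ≤ 1 / n - totalPaid st'.2 j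
  · exact ⟨hpos', htot', hzero', hOK, hpp'⟩
  · exfalso
    push_neg at hOK
    obtain ⟨j, hjS, cq, hcqT, hcqX', hcqα, hlt⟩ := hOK
    set A' : Finset C := (T \ W).filter (fun c => 0 < α c) with hA'def
    set ρstar : ℝ := (cost cstar : ℝ) / (s * α cstar) with hρstar
    have hρstar0 : 0 ≤ ρstar := by
      apply div_nonneg (by exact_mod_cast (hcostpos cstar).le)
      positivity
    have hcsX' : cstar ∉ st'.1 := fun h => hcsW (hsub h)
    -- per-candidate payment/rate facts for the crossing voter
    have hL1 : ∀ c ∈ st'.1, ∃ ρ : ℝ, 0 ≤ ρ ∧ st'.2 j c ≤ u j c * ρ ∧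
        ρ ≤ ρstar ∧ (c ∈ T → α c * ρ ≤ (cost c : ℝ) / s) := by
      intro c hc
      obtain ⟨ρ, hρ0, hpay, hcond, hpin⟩ := hpp' c hc
      exact ⟨ρ, hρ0, hpay j hjS, hcond cstar hcsT hcsX' hcsα, hpin⟩
    -- the crossing voter's total payment
    have hL0 : totalPaid st'.2 j = ∑ c ∈ st'.1, st'.2 j c := by
      unfold totalPaid
      symm
      apply Finset.sum_subset (Finset.subset_univ _)
      intro c _ hc
      exact hzero' j c hc
    have hlt' : 1 / n < (cost cq : ℝ) / s + ∑ c ∈ st'.1, st'.2 j c := by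
      rw [← hL0]; linarith
    -- abbreviations
    set U : ℝ := ∑ c ∈ st'.1, u j c with hU_def
    set Aα : ℝ := ∑ c ∈ st'.1 ∩ T, α c with hAα_def
    set CT : ℝ := ∑ c ∈ st'.1 ∩ T, (cost c : ℝ) with hCT_def
    set Rα : ℝ := ∑ c ∈ (T ∩ W) \ st'.1, α c with hRα_def
    set σ : ℝ := ∑ c ∈ T, α c with hσ_def
    set σA : ℝ := ∑ c ∈ A', α c with hσA_def
    set CA : ℝ := ∑ c ∈ A', (cost c : ℝ) with hCA_def
    -- payment bound
    have hbT : ∑ c ∈ st'.1 ∩ T, st'.2 j c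
        ≤ ∑ c ∈ st'.1 ∩ T, (u j c * ρstar - α c * ρstar + (cost c : ℝ) / s) := by
      apply Finset.sum_le_sum
      intro c hc
      rw [Finset.mem_inter] at hc
      obtain ⟨ρ, hρ0, hpay, hρle, hpin⟩ := hL1 c hc.1
      have hαu' : α c ≤ u j c := hαu j hjS c hc.2
      have hα0 : 0 ≤ α c := (hα01 c).1
      have hpin' := hpin hc.2
      nlinarith [mul_le_mul_of_nonneg_right hαu' (sub_nonneg.mpr hρle)]
    have hbF : ∑ c ∈ st'.1 \ T, st'.2 j c ≤ ∑ c ∈ st'.1 \ T, u j c * ρstar := by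
      apply Finset.sum_le_sum
      intro c hc
      rw [Finset.mem_sdiff] at hc
      obtain ⟨ρ, hρ0, hpay, hρle, _⟩ := hL1 c hc.1
      calc st'.2 j c ≤ u j c * ρ := hpay
        _ ≤ u j c * ρstar := mul_le_mul_of_nonneg_left hρle (hu01 j c).1
    have hTalg : ∑ c ∈ st'.1 ∩ T, (u j c * ρstar - α c * ρstar + (cost c : ℝ) / s)
        = (∑ c ∈ st'.1 ∩ T, u j c) * ρstar - Aα * ρstar + CT / s := by
      rw [Finset.sum_add_distrib, Finset.sum_sub_distrib, ← Finset.sum_mul, ← Finset.sum_mul,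
        ← Finset.sum_div]
    have hUsplit : (∑ c ∈ st'.1 ∩ T, u j c) + (∑ c ∈ st'.1 \ T, u j c) = U :=
      Finset.sum_inter_add_sum_sdiff _ _ _
    have hFalg : ∑ c ∈ st'.1 \ T, u j c * ρstar = (∑ c ∈ st'.1 \ T, u j c) * ρstar :=
      (Finset.sum_mul _ _ _).symm
    have hPsplit : ∑ c ∈ st'.1 ∩ T, st'.2 j c + ∑ c ∈ st'.1 \ T, st'.2 j c
        = ∑ c ∈ st'.1, st'.2 j c := Finset.sum_inter_add_sum_sdiff _ _ _
    have hP : ∑ c ∈ st'.1, st'.2 j c ≤ U * ρstar - Aα * ρstar + CT / s := by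
      have h1 : (∑ c ∈ st'.1 ∩ T, u j c) * ρstar + (∑ c ∈ st'.1 \ T, u j c) * ρstar
          = U * ρstar := by rw [← add_mul, hUsplit]
      rw [hFalg] at hbF
      rw [hTalg] at hbT
      linarith
    -- the σ-identity
    have hσid : ∀ a : C, a ∈ T → a ∉ W → 0 < α a → U ≤ σ - α a - Rα := by
      intro a haT haW haα
      have hdisj : Disjoint st'.1 ((T ∩ W) \ st'.1) := Finset.disjoint_sdiff
      have hsum_union : U + ∑ c ∈ (T ∩ W) \ st'.1, u j c
          = ∑ c ∈ st'.1 ∪ ((T ∩ W) \ st'.1), u j c := (Finset.sum_union hdisj).symm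
      have hsubW : st'.1 ∪ ((T ∩ W) \ st'.1) ⊆ W := by
        apply Finset.union_subset hsub
        exact subset_trans (Finset.sdiff_subset) (Finset.inter_subset_right)
      have h1 : ∑ c ∈ st'.1 ∪ ((T ∩ W) \ st'.1), u j c ≤ ∑ c ∈ W, u j c :=
        Finset.sum_le_sum_of_subset_of_nonneg hsubW (fun i _ _ => (hu01 j i).1)
      have h2' : u j a + ∑ c ∈ W, u j c = util u j (insert a W) := by
        unfold util
        rw [Finset.sum_insert haW]
      have h3 := h2 j hjS a
      have h4 : Rα ≤ ∑ c ∈ (T ∩ W) \ st'.1, u j c := by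
        apply Finset.sum_le_sum
        intro c hc
        rw [Finset.mem_sdiff, Finset.mem_inter] at hc
        exact hαu j hjS c hc.1.1
      have h5 : α a ≤ u j a := hαu j hjS a haT
      linarith
    -- partition of the α-mass of T ∩ W
    have hpartaux := Finset.sum_inter_add_sum_sdiff (T ∩ W) st'.1 α
    have hseteq : (T ∩ W) ∩ st'.1 = st'.1 ∩ T := by
      ext c
      simp only [Finset.mem_inter]
      constructor
      · rintro ⟨⟨h1, h2⟩, h3⟩; exact ⟨h3, h1⟩
      · rintro ⟨h1, h2⟩; exact ⟨⟨h2, hsub h1⟩, h1⟩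
    have hpart : Rα + Aα = ∑ c ∈ T ∩ W, α c := by
      rw [hseteq] at hpartaux
      rw [hRα_def, hAα_def]
      linarith
    have hσA : σ - ∑ c ∈ T ∩ W, α c = σA := by
      have e1 : ∑ c ∈ T ∩ W, α c + ∑ c ∈ T \ W, α c = σ :=
        Finset.sum_inter_add_sum_sdiff T W α
      have e2 : ∑ c ∈ T \ W, α c = σA := by
        rw [← Finset.sum_filter_add_sum_filter_not (T \ W) (fun c => 0 < α c) α]
        have e3 : ∑ c ∈ (T \ W).filter (fun c => ¬ 0 < α c), α c = 0 := by
          apply Finset.sum_eq_zero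
          intro c hc
          rw [Finset.mem_filter] at hc
          exact le_antisymm (not_lt.mp hc.2) (hα01 c).1
        rw [e3, hσA_def, hA'def]
        ring
      linarith
    -- ratio bound for all remaining good candidates
    have hratio : ∀ c ∈ A', ρstar * α c ≤ (cost c : ℝ) / s := by
      intro c hc
      rw [hA'def, Finset.mem_filter, Finset.mem_sdiff] at hc
      obtain ⟨⟨hcT', hcW'⟩, hcα'⟩ := hc
      have h12 : (cost cstar : ℝ) * α c ≤ (cost c : ℝ) * α cstar :=
        (div_le_div_iff₀ hcsα hcα').mp (hcsmin c hcT' hcW' hcα')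
      have hsα : (0:ℝ) < s * α cstar := by positivity
      calc ρstar * α c = (cost cstar : ℝ) * α c / (s * α cstar) := by
            rw [hρstar, div_mul_eq_mul_div]
        _ ≤ (cost c : ℝ) * α cstar / (s * α cstar) := by gcongr
        _ = (cost c : ℝ) / s := by
            rw [mul_comm s (α cstar), ← div_div, mul_div_assoc, div_self (ne_of_gt hcsα),
              mul_one]
    -- common budget facts
    have hcoh' : costOf cost T / s ≤ 1 / n := by
      rw [div_le_div_iff₀ hs hn]
      linarith [hcoh]
    have hdisjA : Disjoint A' (st'.1 ∩ T) := by
      rw [Finset.disjoint_left]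
      intro c hc hc2
      rw [hA'def, Finset.mem_filter, Finset.mem_sdiff] at hc
      exact hc.1.2 (hsub (Finset.mem_inter.mp hc2).1)
    have hCACT : CA + CT = ∑ c ∈ A' ∪ (st'.1 ∩ T), (cost c : ℝ) :=
      (Finset.sum_union hdisjA).symm
    have hsubT : A' ∪ (st'.1 ∩ T) ⊆ T := by
      apply Finset.union_subset
      · rw [hA'def]
        exact subset_trans (Finset.filter_subset _ _) (Finset.sdiff_subset)
      · exact Finset.inter_subset_right
    have hcostnn : ∀ c : C, (0:ℝ) ≤ (cost c : ℝ) := fun c => by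
      exact_mod_cast (hcostpos c).le
    have hCACTle : CA + CT ≤ costOf cost T := by
      rw [hCACT]
      exact Finset.sum_le_sum_of_subset_of_nonneg hsubT (fun c _ _ => hcostnn c)
    by_cases hcqW : cq ∈ W
    · -- the floor-violating candidate is a (not yet bought) winner: use cstar as the witness
      have hUb := hσid cstar hcsT hcsW hcsα
      have hUρ : U * ρstar ≤ (σ - α cstar - Rα) * ρstar :=
        mul_le_mul_of_nonneg_right hUb hρstar0
      have heq2 : σ - α cstar - Rα - Aα = σA - α cstar := by linarith
      have hmed : ρstar * σA ≤ CA / s := by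
        calc ρstar * σA = ∑ c ∈ A', ρstar * α c := by rw [hσA_def, Finset.mul_sum]
          _ ≤ ∑ c ∈ A', (cost c : ℝ) / s := Finset.sum_le_sum hratio
          _ = CA / s := by rw [hCA_def, Finset.sum_div]
      have hmed2 : (σA - α cstar) * ρstar ≤ CA / s := by
        nlinarith [mul_nonneg hρstar0 (hα01 cstar).1]
      have hq : cq ∉ A' ∪ (st'.1 ∩ T) := by
        rw [Finset.mem_union]
        push_neg
        constructor
        · rw [hA'def, Finset.mem_filter, Finset.mem_sdiff]
          intro h
          exact h.1.2 hcqW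
        · intro h
          exact hcqX' (Finset.mem_inter.mp h).1
      have hbud : (cost cq : ℝ) + (CA + CT) ≤ costOf cost T := by
        calc (cost cq : ℝ) + (CA + CT)
            = ∑ c ∈ insert cq (A' ∪ (st'.1 ∩ T)), (cost c : ℝ) := by
              rw [Finset.sum_insert hq, hCACT]
          _ ≤ costOf cost T := by
              apply Finset.sum_le_sum_of_subset_of_nonneg _ (fun c _ _ => hcostnn c)
              rw [Finset.insert_subset_iff]
              exact ⟨hcqT, hsubT⟩
      have hchain : ∑ c ∈ st'.1, st'.2 j c ≤ (CA + CT) / s := by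
        calc ∑ c ∈ st'.1, st'.2 j c ≤ U * ρstar - Aα * ρstar + CT / s := hP
          _ ≤ (σ - α cstar - Rα) * ρstar - Aα * ρstar + CT / s := by linarith
          _ = (σA - α cstar) * ρstar + CT / s := by rw [← sub_mul, heq2]
          _ ≤ CA / s + CT / s := by linarith
          _ = (CA + CT) / s := by rw [← add_div]
      have hfin : (cost cq : ℝ) / s + (CA + CT) / s ≤ costOf cost T / s := by
        rw [← add_div]
        gcongr
      linarith
    · -- the floor-violating candidate is itself unbought: use it as the witness
      have hcqA' : cq ∈ A' := by
        rw [hA'def, Finset.mem_filter, Finset.mem_sdiff]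
        exact ⟨⟨hcqT, hcqW⟩, hcqα⟩
      have hUb := hσid cq hcqT hcqW hcqα
      have hUρ : U * ρstar ≤ (σ - α cq - Rα) * ρstar :=
        mul_le_mul_of_nonneg_right hUb hρstar0
      have heq2 : σ - α cq - Rα - Aα = σA - α cq := by linarith
      set CE : ℝ := ∑ c ∈ A'.erase cq, (cost c : ℝ) with hCE_def
      have hErase : α cq + ∑ c ∈ A'.erase cq, α c = σA := by
        rw [hσA_def]
        exact Finset.add_sum_erase A' α hcqA'
      have hmed : (σA - α cq) * ρstar ≤ CE / s := by
        have h1 : σA - α cq = ∑ c ∈ A'.erase cq, α c := by linarith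
        calc (σA - α cq) * ρstar = ∑ c ∈ A'.erase cq, α c * ρstar := by
              rw [h1, Finset.sum_mul]
          _ ≤ ∑ c ∈ A'.erase cq, (cost c : ℝ) / s := by
              apply Finset.sum_le_sum
              intro c hc
              have := hratio c (Finset.erase_subset _ _ hc)
              linarith [this]
          _ = CE / s := by rw [hCE_def, Finset.sum_div]
      have hbudE : (cost cq : ℝ) + CE = CA := by
        rw [hCE_def, hCA_def]
        exact Finset.add_sum_erase A' (fun c => ((cost c : ℝ))) hcqA'
      have hchain : ∑ c ∈ st'.1, st'.2 j c ≤ (CE + CT) / s := by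
        calc ∑ c ∈ st'.1, st'.2 j c ≤ U * ρstar - Aα * ρstar + CT / s := hP
          _ ≤ (σ - α cq - Rα) * ρstar - Aα * ρstar + CT / s := by linarith
          _ = (σA - α cq) * ρstar + CT / s := by rw [← sub_mul, heq2]
          _ ≤ CE / s + CT / s := by linarith
          _ = (CE + CT) / s := by rw [← add_div]
      have hbud : (cost cq : ℝ) + (CE + CT) ≤ costOf cost T := by linarith
      have hfin : (cost cq : ℝ) / s + (CE + CT) / s ≤ costOf cost T / s := by
        rw [← add_div]
        gcongr
      linarith

end Step

section Final
variable {V C : Type*} [Fintype V] [DecidableEq V] [Fintype C] [DecidableEq C]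

lemma inv_init (cost : C → ℚ) (u : V → C → ℝ) (S : Finset V) (T : Finset C) (α : C → ℝ)
    (hcostpos : ∀ c, 0 < cost c)
    (hs : 0 < (S.card : ℝ)) (hn : 0 < (Fintype.card V : ℝ))
    (hcoh : costOf cost T * (Fintype.card V : ℝ) ≤ (S.card : ℝ)) :
    InvX cost u S T α ∅ (fun _ _ => 0) := by
  have htp : ∀ j : V, totalPaid (fun (_ : V) (_ : C) => (0:ℝ)) j = 0 := by
    intro j
    unfold totalPaid
    simp
  refine ⟨fun i c => le_refl 0, ?_, fun i c _ => rfl, ?_, fun c hc => absurd hc (Finset.notMem_empty c)⟩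
  · intro i
    rw [htp i]
    positivity
  · intro j hj c hcT _ _
    have h1 : (cost c : ℝ) ≤ costOf cost T := by
      unfold costOf
      apply Finset.single_le_sum (fun c _ => ?_) hcT
      exact_mod_cast (hcostpos c).le
    rw [htp j, sub_zero]
    calc (cost c : ℝ) / (S.card : ℝ) ≤ costOf cost T / (S.card : ℝ) := by gcongr
      _ ≤ 1 / (Fintype.card V : ℝ) := by
          rw [div_le_div_iff₀ hs hn]
          linarith

end Final


/-- Every outcome produced by an execution of Rule X satisfies
extended justified representation up to one project. -/
theorem ruleX_satisfies_EJR_up_to_one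
    {V C : Type*} [Fintype V] [DecidableEq V] [Fintype C] [DecidableEq C]
    (cost : C → ℚ) (u : V → C → ℝ) (hvalid : validPB cost u)
    (W : Finset C) (hW : RuleXOutcome cost u W) :
    EJRupToOne cost u W := by
  classical
  intro α S T hα01 hSne hcoh hαu
  by_contra hcon
  push_neg at hcon
  obtain ⟨h1, h2⟩ := hcon
  obtain ⟨hcostpos, hu01, -⟩ := hvalid
  obtain ⟨pay, hRTG, hTerm⟩ := hW
  obtain ⟨i0, hi0⟩ := hSne
  have hn : (0:ℝ) < (Fintype.card V : ℝ) := by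
    have : 0 < Fintype.card V := Fintype.card_pos_iff.mpr ⟨i0⟩
    exact_mod_cast this
  have hs : (0:ℝ) < (S.card : ℝ) := by
    have : 0 < S.card := Finset.card_pos.mpr ⟨i0, hi0⟩
    exact_mod_cast this
  -- a candidate in T \ W with positive α exists
  set A' : Finset C := (T \ W).filter (fun c => 0 < α c) with hA'def
  have hA'ne : A'.Nonempty := by
    by_contra hA'
    rw [Finset.not_nonempty_iff_eq_empty] at hA'
    have hTWzero : ∀ c ∈ T \ W, α c = 0 := by
      intro c hc
      by_contra hz
      have hcA' : c ∈ A' := by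
        rw [hA'def, Finset.mem_filter]
        exact ⟨hc, lt_of_le_of_ne (hα01 c).1 (Ne.symm hz)⟩
      rw [hA'] at hcA'
      exact absurd hcA' (Finset.notMem_empty c)
    have e1 : ∑ c ∈ T, α c = ∑ c ∈ T ∩ W, α c := by
      rw [← Finset.sum_inter_add_sum_sdiff T W α, Finset.sum_eq_zero hTWzero, add_zero]
    have e2 : ∑ c ∈ T ∩ W, α c ≤ ∑ c ∈ T ∩ W, u i0 c :=
      Finset.sum_le_sum (fun c hc => hαu i0 hi0 c (Finset.mem_inter.mp hc).1)
    have e3 : ∑ c ∈ T ∩ W, u i0 c ≤ util u i0 W := by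
      unfold util
      exact Finset.sum_le_sum_of_subset_of_nonneg Finset.inter_subset_right
        (fun c _ _ => (hu01 i0 c).1)
    have := h1 i0 hi0
    linarith
  -- the best-ratio unbought candidate
  obtain ⟨cstar, hcsA', hcsmin'⟩ :=
    Finset.exists_min_image A' (fun c => (cost c : ℝ) / α c) hA'ne
  have hcsmem := hcsA'
  rw [hA'def, Finset.mem_filter, Finset.mem_sdiff] at hcsmem
  obtain ⟨⟨hcsT, hcsW⟩, hcsα⟩ := hcsmem
  have hcsmin : ∀ c ∈ T, c ∉ W → 0 < α c →
      (cost cstar : ℝ) / α cstar ≤ (cost c : ℝ) / α c := by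
    intro c hcT hcW hcα
    apply hcsmin'
    rw [hA'def, Finset.mem_filter, Finset.mem_sdiff]
    exact ⟨⟨hcT, hcW⟩, hcα⟩
  -- the invariant holds along the whole execution
  have main : ∀ st : Finset C × (V → C → ℝ),
      Relation.ReflTransGen (RuleXStep cost u) (∅, fun _ _ => 0) st →
      Relation.ReflTransGen (RuleXStep cost u) st (W, pay) →
      InvX cost u S T α st.1 st.2 := by
    intro st hinit
    induction hinit with
    | refl =>
        intro _
        exact inv_init cost u S T α hcostpos hs hn hcoh
    | tail hab hbc ih =>
        intro h2'
        have hbfin := Relation.ReflTransGen.head hbc h2'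
        have hInvb := ih hbfin
        have hsub' := rtg_mono cost u h2'
        exact inv_step cost u S T α W hcostpos hu01 hα01 hs hn hcoh hαu h2
          cstar hcsT hcsW hcsα hcsmin _ _ _ hInvb hbc hsub'
  have hInvW := main (W, pay) hRTG Relation.ReflTransGen.refl
  obtain ⟨hpos, htot, hzero, hok, hpp⟩ := hInvW
  obtain ⟨ρ, hρ0, _, haff⟩ :=
    afford_remaining cost u S α pay cstar (by exact_mod_cast hcostpos cstar) hs hcsα
      (fun j hj => hαu j hj cstar hcsT) (fun i => (hu01 i cstar).1)
      (fun i => sub_nonneg.mpr (htot i))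
      (fun j hj => hok j hj cstar hcsT hcsW hcsα)
  exact hTerm ρ hρ0 cstar hcsW haff
end

section
/- For every PB election there exists a feasible outcome W that satisfies extended justified representation up to one project: for every (α,T)-cohesive group of voters S there exists a voter i ∈ S such that u_i(W) ≥ Σ_{c∈T} α(c), or there exist i ∈ S and a candidate a ∈ C with u_i(W ∪ {a}) > Σ_{c∈T} α(c). -/
open Finset

section Aux

variable {V C : Type*} [Fintype V] [DecidableEq V] [Fintype C] [DecidableEq C]

lemma util_nonneg' (u : V → C → ℝ) (hu : ∀ i c, 0 ≤ u i c) (i : V) (T : Finset C) :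
    0 ≤ util u i T := Finset.sum_nonneg fun c _ => hu i c

lemma util_mono' (u : V → C → ℝ) (hu : ∀ i c, 0 ≤ u i c) (i : V) {T W : Finset C}
    (h : T ⊆ W) : util u i T ≤ util u i W :=
  Finset.sum_le_sum_of_subset_of_nonneg h (fun c _ _ => hu i c)

lemma costOf_nonneg' (cost : C → ℚ) (hc : ∀ c, 0 < cost c) (T : Finset C) :
    0 ≤ costOf cost T :=
  Finset.sum_nonneg fun c _ => by exact_mod_cast (hc c).le

/-- Greedy cohesive lemma: for any set `A` of active voters there is an outcome `W`
costing at most `|A|/n` that satisfies the FJR guarantee for all cohesive groups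
inside `A`. -/
lemma greedy_cohesive (cost : C → ℚ) (u : V → C → ℝ) (hc : ∀ c, 0 < cost c)
    (hu : ∀ i c, 0 ≤ u i c) :
    ∀ (k : ℕ) (A : Finset V), A.card ≤ k → ∃ W : Finset C,
      costOf cost W * (Fintype.card V : ℝ) ≤ (A.card : ℝ) ∧
      ∀ (β : ℝ) (S : Finset V) (T : Finset C), S ⊆ A → S.Nonempty →
        costOf cost T * (Fintype.card V : ℝ) ≤ (S.card : ℝ) →
        (∀ i ∈ S, β ≤ util u i T) →
        ∃ i ∈ S, β ≤ util u i W := by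
  intro k
  induction k with
  | zero =>
      intro A hA
      have hAe : A = ∅ := Finset.card_eq_zero.mp (Nat.le_zero.mp hA)
      subst hAe
      refine ⟨∅, by simp [costOf], ?_⟩
      intro β S T hSA hS _ _
      exact absurd (hSA hS.choose_spec) (Finset.notMem_empty _)
  | succ k ih =>
      intro A hA
      classical
      rcases A.eq_empty_or_nonempty with hAe | ⟨a, ha⟩
      · subst hAe
        refine ⟨∅, by simp [costOf], ?_⟩
        intro β S T hSA hS _ _
        exact absurd (hSA hS.choose_spec) (Finset.notMem_empty _)
      · -- the set of cohesive pairs inside A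
        set P : Finset (Finset V × Finset C) :=
          (A.powerset ×ˢ (Finset.univ : Finset C).powerset).filter
            (fun p => p.1.Nonempty ∧
              costOf cost p.2 * (Fintype.card V : ℝ) ≤ (p.1.card : ℝ)) with hP
        have hmem : ∀ (S : Finset V) (T : Finset C), S ⊆ A → S.Nonempty →
            costOf cost T * (Fintype.card V : ℝ) ≤ (S.card : ℝ) → (S, T) ∈ P := by
          intro S T hSA hS hT
          simp only [hP, Finset.mem_filter, Finset.mem_product, Finset.mem_powerset]
          exact ⟨⟨hSA, Finset.subset_univ _⟩, hS, hT⟩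
        have hPne : P.Nonempty := by
          refine ⟨({a}, ∅), hmem {a} ∅ (Finset.singleton_subset_iff.mpr ha)
            (Finset.singleton_nonempty a) ?_⟩
          simp [costOf]
        -- value of a pair: minimum utility within the group
        set g : Finset V × Finset C → ℝ := fun p =>
          if h : p.1.Nonempty then p.1.inf' h (fun i => util u i p.2) else 0 with hg
        obtain ⟨q, hqP, hqmax⟩ := P.exists_max_image g hPne
        obtain ⟨⟨hq1A, -⟩, hq1ne, hqcost⟩ : (q.1 ⊆ A ∧ q.2 ⊆ Finset.univ) ∧ q.1.Nonempty ∧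
            costOf cost q.2 * (Fintype.card V : ℝ) ≤ (q.1.card : ℝ) := by
          simpa [hP, Finset.mem_filter, Finset.mem_product, Finset.mem_powerset] using hqP
        -- recurse on the remaining voters
        have hcard : (A \ q.1).card ≤ k := by
          have h1 : (A \ q.1).card = A.card - q.1.card := Finset.card_sdiff_of_subset hq1A
          have h2 : 1 ≤ q.1.card := Finset.card_pos.mpr hq1ne
          omega
        obtain ⟨W', hW'c, hW'p⟩ := ih (A \ q.1) hcard
        refine ⟨W' ∪ q.2, ?_, ?_⟩
        · -- cost bound
          have hsub : costOf cost (W' ∪ q.2) ≤ costOf cost W' + costOf cost q.2 := by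
            have : costOf cost (W' ∪ q.2) = costOf cost W' + costOf cost (q.2 \ W') := by
              rw [costOf, costOf, costOf, ← Finset.sum_union (Finset.disjoint_sdiff),
                Finset.union_sdiff_self_eq_union]
            rw [this]
            have : costOf cost (q.2 \ W') ≤ costOf cost q.2 :=
              Finset.sum_le_sum_of_subset_of_nonneg (Finset.sdiff_subset)
                (fun c _ _ => by exact_mod_cast (hc c).le)
            linarith
          have hcards : ((A \ q.1).card : ℝ) + (q.1.card : ℝ) = (A.card : ℝ) := by
            have := Finset.card_sdiff_add_card_eq_card hq1A
            exact_mod_cast this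
          have hn : (0 : ℝ) ≤ (Fintype.card V : ℝ) := Nat.cast_nonneg _
          nlinarith [hW'c, hqcost]
        · intro β S T hSA hS hT hβ
          rcases (S ∩ q.1).eq_empty_or_nonempty with hint | ⟨i, hi⟩
          · -- S untouched: use the recursive guarantee
            have hSA' : S ⊆ A \ q.1 := by
              intro x hx
              refine Finset.mem_sdiff.mpr ⟨hSA hx, fun hxq => ?_⟩
              exact absurd (Finset.mem_inter.mpr ⟨hx, hxq⟩) (by simp [hint])
            obtain ⟨i, hiS, hiW⟩ := hW'p β S T hSA' hS hT hβ
            exact ⟨i, hiS, le_trans hiW (util_mono' u hu i Finset.subset_union_left)⟩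
          · -- some voter of S was served with at least value g (S,T) ≥ β
            rw [Finset.mem_inter] at hi
            refine ⟨i, hi.1, ?_⟩
            have hST : (S, T) ∈ P := hmem S T hSA hS hT
            have hβg : β ≤ g (S, T) := by
              rw [hg]
              simp only [dif_pos hS]
              exact Finset.le_inf' hS _ (fun j hj => hβ j hj)
            have hgq : g (S, T) ≤ g q := hqmax _ hST
            have hgle : g q ≤ util u i q.2 := by
              rw [hg]
              simp only [dif_pos hq1ne]
              exact Finset.inf'_le _ hi.2
            have : util u i q.2 ≤ util u i (W' ∪ q.2) :=
              util_mono' u hu i Finset.subset_union_right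
            linarith

end Aux

/-- For every PB election there exists a feasible outcome satisfying
extended justified representation up to one project. -/
theorem exists_feasible_EJR_up_to_one
    {V C : Type*} [Fintype V] [DecidableEq V] [Fintype C] [DecidableEq C]
    (cost : C → ℚ) (u : V → C → ℝ) (hvalid : validPB cost u) :
    ∃ W : Finset C, feasible cost W ∧ EJRupToOne cost u W := by
  obtain ⟨hc, hu01, -⟩ := hvalid
  have hu : ∀ i c, 0 ≤ u i c := fun i c => (hu01 i c).1
  rcases Nat.eq_zero_or_pos (Fintype.card V) with hn | hn
  · refine ⟨∅, by simp [feasible, costOf], ?_⟩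
    intro α S T _ hS _ _
    have : IsEmpty V := Fintype.card_eq_zero_iff.mp hn
    exact (this.false hS.choose).elim
  · obtain ⟨W, hWc, hWp⟩ := greedy_cohesive cost u hc hu (Fintype.card V)
      (Finset.univ : Finset V) (by simp [Finset.card_univ])
    refine ⟨W, ?_, ?_⟩
    · have hcard : ((Finset.univ : Finset V).card : ℝ) = (Fintype.card V : ℝ) := by
        simp [Finset.card_univ]
      rw [hcard] at hWc
      have hn' : (0 : ℝ) < (Fintype.card V : ℝ) := by exact_mod_cast hn
      have h1 : costOf cost W * (Fintype.card V : ℝ) ≤ 1 * (Fintype.card V : ℝ) := by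
        rw [one_mul]; exact hWc
      exact le_of_mul_le_mul_right h1 hn'
    · intro α S T hα hS hTcost hcoh
      left
      refine hWp (∑ c ∈ T, α c) S T (Finset.subset_univ S) hS hTcost ?_
      intro i hiS
      exact Finset.sum_le_sum fun c hcT => hcoh i hiS c hcT
end

section
/- Consider the two approval-based elections E1 and E2 on the voter set N = {1,2,3} and candidate set C = {L1, L2, L3, R}, with approval sets A(1) = A(2) = {L1, L2, L3} and A(3) = {R}, where in E1 the costs are cost(L1) = cost(L2) = cost(L3) = 2/9 and cost(R) = 1/2, and in E2 every candidate costs 1/3. Then: (i) a set W ⊆ C is feasible in E1 if and only if it is feasible in E2 (namely, exactly the proper subsets of C are feasible); (ii) every feasible outcome satisfying EJR in E1 contains all of L1, L2, L3; (iii) every feasible outcome satisfying EJR in E2 contains R. Consequently no single feasible set satisfies EJR in both E1 and E2, so every voting rule whose output depends only on the voters' utility functions and the family of feasible sets fails EJR on at least one of E1, E2. -/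
open Finset

/-- Onetown costs: the three L-projects (candidates 0,1,2) cost 2/9 each and
the R-project (candidate 3) costs 1/2. -/
def onetownCost : Fin 4 → ℚ := fun c => if c = 3 then 1/2 else 2/9

/-- Twotown costs: every candidate costs 1/3. -/
def twotownCost : Fin 4 → ℚ := fun _ => 1/3

/-- Approval sets: voters 0 and 1 approve {L1,L2,L3} = {0,1,2}; voter 2 approves {R} = {3}. -/
def townApprovals : Fin 3 → Finset (Fin 4) := fun i => if i = 2 then {3} else {0, 1, 2}

lemma costOf_eq_cast {C : Type*} [Fintype C] [DecidableEq C] (cost : C → ℚ) (T : Finset C) :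
    costOf cost T = ((∑ c ∈ T, cost c : ℚ) : ℝ) := by
  simp [costOf]

lemma feasible_iff_rat {C : Type*} [Fintype C] [DecidableEq C] (cost : C → ℚ) (W : Finset C) :
    feasible cost W ↔ (∑ c ∈ W, cost c) ≤ 1 := by
  rw [feasible, costOf_eq_cast]
  exact_mod_cast Iff.rfl

lemma part1 (W : Finset (Fin 4)) :
      (feasible onetownCost W ↔ feasible twotownCost W) ∧
      (feasible onetownCost W ↔ W ≠ Finset.univ) := by
  have h1 : feasible onetownCost W ↔ W ≠ Finset.univ := by
    rw [feasible_iff_rat]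
    fin_cases W <;>
      first
        | exact iff_of_true (by simp [onetownCost]; try norm_num) (by decide)
        | exact iff_of_false (by simp [onetownCost]; try norm_num) (by decide)
  have h2 : feasible twotownCost W ↔ W ≠ Finset.univ := by
    rw [feasible_iff_rat]
    fin_cases W <;>
      first
        | exact iff_of_true (by simp [twotownCost]; try norm_num) (by decide)
        | exact iff_of_false (by simp [twotownCost]; try norm_num) (by decide)
  exact ⟨h1.trans h2.symm, h1⟩

lemma part2 (W : Finset (Fin 4)) (hf : feasible onetownCost W)
    (hE : approvalEJR onetownCost townApprovals W) :
    ({0, 1, 2} : Finset (Fin 4)) ⊆ W := by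
  obtain ⟨i, hi, hcard⟩ := hE {0, 1} {0, 1, 2} (by decide)
    (by
      rw [costOf_eq_cast]
      have h : (∑ c ∈ ({0,1,2} : Finset (Fin 4)), onetownCost c) = 2/3 := by
        rw [show ({0,1,2} : Finset (Fin 4)) = insert 0 (insert 1 {2}) from rfl,
          Finset.sum_insert (by decide), Finset.sum_insert (by decide), Finset.sum_singleton]
        simp [onetownCost]
        norm_num
      rw [h]
      norm_num)
    (by decide)
  have hsub : (townApprovals i ∩ W) ⊆ ({0,1,2} : Finset (Fin 4)) := by
    have : townApprovals i = ({0,1,2} : Finset (Fin 4)) := by fin_cases hi <;> decide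
    rw [this]; exact Finset.inter_subset_left
  have h3 : ({0,1,2} : Finset (Fin 4)).card ≤ (townApprovals i ∩ W).card := by
    simpa using hcard
  have := Finset.eq_of_subset_of_card_le hsub h3
  rw [← this]
  have heq : townApprovals i = ({0,1,2} : Finset (Fin 4)) := by fin_cases hi <;> decide
  rw [heq]
  exact Finset.inter_subset_right

lemma part3 (W : Finset (Fin 4)) (hf : feasible twotownCost W)
    (hE : approvalEJR twotownCost townApprovals W) : (3 : Fin 4) ∈ W := by
  obtain ⟨i, hi, hcard⟩ := hE {2} {3} (by decide)
    (by
      rw [costOf_eq_cast]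
      have h : (∑ c ∈ ({3} : Finset (Fin 4)), twotownCost c) = 1/3 := by
        rw [Finset.sum_singleton]; rfl
      rw [h]
      norm_num)
    (by decide)
  have hi2 : i = 2 := by fin_cases hi; rfl
  subst hi2
  have h1 : 1 ≤ (townApprovals 2 ∩ W).card := by simpa using hcard
  have : (townApprovals 2 ∩ W).Nonempty := Finset.card_pos.mp h1
  obtain ⟨x, hx⟩ := this
  have : x ∈ ({3} : Finset (Fin 4)) ∧ x ∈ W := by
    simpa [townApprovals] using Finset.mem_inter.mp hx
  obtain ⟨h1, h2⟩ := this
  have : x = 3 := by simpa using h1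
  rwa [this] at h2

lemma part4 : ¬ ∃ W : Finset (Fin 4),
      (feasible onetownCost W ∧ approvalEJR onetownCost townApprovals W) ∧
      (feasible twotownCost W ∧ approvalEJR twotownCost townApprovals W) := by
  rintro ⟨W, ⟨hf1, hE1⟩, hf2, hE2⟩
  have hL := part2 W hf1 hE1
  have hR := part3 W hf2 hE2
  have hU : W = Finset.univ := by
    apply Finset.eq_univ_iff_forall.mpr
    intro x
    fin_cases x
    · exact hL (by decide)
    · exact hL (by decide)
    · exact hL (by decide)
    · exact hR
  exact ((part1 W).2.mp hf1) hU


/-- Onetown and Twotown have the same feasible sets (exactly the proper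
subsets of C), but every feasible EJR outcome of Onetown contains all of L1,L2,L3,
while every feasible EJR outcome of Twotown contains R; consequently no single
feasible set satisfies EJR in both elections, so every voting rule depending only
on the utility functions and the family of feasible sets fails EJR on one of them. -/
theorem welfarist_impossibility :
    (∀ W : Finset (Fin 4),
      (feasible onetownCost W ↔ feasible twotownCost W) ∧
      (feasible onetownCost W ↔ W ≠ Finset.univ)) ∧
    (∀ W : Finset (Fin 4), feasible onetownCost W → approvalEJR onetownCost townApprovals W →
      ({0, 1, 2} : Finset (Fin 4)) ⊆ W) ∧
    (∀ W : Finset (Fin 4), feasible twotownCost W → approvalEJR twotownCost townApprovals W →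
      (3 : Fin 4) ∈ W) ∧
    (¬ ∃ W : Finset (Fin 4),
      (feasible onetownCost W ∧ approvalEJR onetownCost townApprovals W) ∧
      (feasible twotownCost W ∧ approvalEJR twotownCost townApprovals W)) ∧
    (∀ R : (Fin 3 → Finset (Fin 4)) → (Finset (Fin 4) → Prop) → Finset (Fin 4),
      feasible onetownCost (R townApprovals (feasible onetownCost)) →
      feasible twotownCost (R townApprovals (feasible twotownCost)) →
      ¬ (approvalEJR onetownCost townApprovals (R townApprovals (feasible onetownCost)) ∧
         approvalEJR twotownCost townApprovals (R townApprovals (feasible twotownCost)))) := by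
  refine ⟨part1, part2, part3, part4, ?_⟩
  intro R hf1 hf2 ⟨hE1, hE2⟩
  have hfeq : feasible onetownCost = (feasible twotownCost : Finset (Fin 4) → Prop) := by
    funext W
    exact propext (part1 W).1
  rw [hfeq] at hf1 hE1
  exact part4 ⟨R townApprovals (feasible twotownCost), ⟨by rwa [← hfeq] at hf1 ⊢, by rwa [← hfeq] at hE1 ⊢⟩, hf2, hE2⟩
end

section
/- For every integer r ≥ 2 there is an approval-based election on which PAV fails EJR: take n = r² voters and candidates a_1, …, a_r each of cost 1/r and b_1, …, b_r each of cost 1/r³, where voters 1, …, r²−1 approve {a_1, …, a_r} and voter r² approves {b_1, …, b_r}. Then the outcome W = {a_1, …, a_r} has PAV score at least that of every feasible outcome, yet W fails EJR: the group S = {voter r²} is {b_1, …, b_r}-cohesive but |A(r²) ∩ W| = 0 < r. -/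
open Finset

section Helpers


lemma harm_nonneg' (t : ℕ) : 0 ≤ harm t := by unfold harm; positivity

lemma harm_mono' : Monotone harm := fun s t h => by
  unfold harm
  exact Finset.sum_le_sum_of_subset_of_nonneg (Finset.range_subset_range.2 h)
    (by intros; positivity)

lemma harm_succ' (t : ℕ) : harm (t + 1) = harm t + 1 / ((t : ℝ) + 1) := by
  unfold harm; rw [Finset.sum_range_succ]

lemma harm_le' (t : ℕ) : harm t ≤ ((t : ℝ) + 1) / 2 := by
  induction t with
  | zero => simp [harm]
  | succ t ih =>
    rcases Nat.eq_zero_or_pos t with h | h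
    · subst h; simp [harm_succ', harm]
    · rw [harm_succ']
      have h1 : (1 : ℝ) ≤ t := by exact_mod_cast h
      have h2 : 1 / ((t : ℝ) + 1) ≤ 1 / 2 := by
        apply one_div_le_one_div_of_le <;> linarith
      push_cast; linarith

lemma key_ineq (r kL kR : ℕ) (hr : 2 ≤ r) (hkL : kL ≤ r - 1) (hkR : kR ≤ r) :
    ((r ^ 2 - 1 : ℕ) : ℝ) * harm kL + harm kR ≤ ((r ^ 2 - 1 : ℕ) : ℝ) * harm r := by
  have hrR : (2 : ℝ) ≤ (r : ℝ) := by exact_mod_cast hr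
  have hr0 : (0 : ℝ) < (r : ℝ) := by linarith
  have hc : ((r ^ 2 - 1 : ℕ) : ℝ) = (r : ℝ) ^ 2 - 1 := by
    have : 1 ≤ r ^ 2 := by nlinarith
    push_cast [Nat.cast_sub this]; ring
  have h3 : harm r = harm (r - 1) + 1 / (r : ℝ) := by
    have he : r = (r - 1) + 1 := by omega
    have hcast : ((r - 1 : ℕ) : ℝ) + 1 = (r : ℝ) := by
      push_cast [Nat.cast_sub (by omega : 1 ≤ r)]; ring
    conv_lhs => rw [he]
    rw [harm_succ', hcast]
  have h1 : harm kL ≤ harm r - 1 / (r : ℝ) := by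
    have := harm_mono' hkL; linarith
  have h2 : harm kR ≤ harm r := harm_mono' hkR
  have h4 : harm r ≤ ((r : ℝ) + 1) / 2 := harm_le' r
  have hN : (0 : ℝ) ≤ ((r ^ 2 - 1 : ℕ) : ℝ) := by rw [hc]; nlinarith
  have h5 : ((r ^ 2 - 1 : ℕ) : ℝ) * harm kL
      ≤ ((r ^ 2 - 1 : ℕ) : ℝ) * (harm r - 1 / (r : ℝ)) :=
    mul_le_mul_of_nonneg_left h1 hN
  have h6 : harm r ≤ ((r ^ 2 - 1 : ℕ) : ℝ) / (r : ℝ) := by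
    rw [le_div_iff₀ hr0, hc]; nlinarith
  have h7 : ((r ^ 2 - 1 : ℕ) : ℝ) / (r : ℝ)
      = ((r ^ 2 - 1 : ℕ) : ℝ) * (1 / (r : ℝ)) := by ring
  rw [h7] at h6
  linarith

lemma mem_imgL {r : ℕ} (c : Fin r ⊕ Fin r) :
    c ∈ (Finset.univ.image Sum.inl : Finset (Fin r ⊕ Fin r)) ↔ c.isLeft := by
  cases c <;> simp

lemma mem_imgR {r : ℕ} (c : Fin r ⊕ Fin r) :
    c ∈ (Finset.univ.image Sum.inr : Finset (Fin r ⊕ Fin r)) ↔ c.isRight := by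
  cases c <;> simp

lemma imgL_inter {r : ℕ} (W : Finset (Fin r ⊕ Fin r)) :
    (Finset.univ.image Sum.inl : Finset (Fin r ⊕ Fin r)) ∩ W
      = W.filter (fun c => c.isLeft) := by
  ext c; cases c <;> simp

lemma imgR_inter {r : ℕ} (W : Finset (Fin r ⊕ Fin r)) :
    (Finset.univ.image Sum.inr : Finset (Fin r ⊕ Fin r)) ∩ W
      = W.filter (fun c => c.isRight) := by
  ext c; cases c <;> simp

lemma card_imgL (r : ℕ) :
    (Finset.univ.image Sum.inl : Finset (Fin r ⊕ Fin r)).card = r := by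
  rw [Finset.card_image_of_injective _ Sum.inl_injective, Finset.card_univ,
    Fintype.card_fin]

lemma card_imgR (r : ℕ) :
    (Finset.univ.image Sum.inr : Finset (Fin r ⊕ Fin r)).card = r := by
  rw [Finset.card_image_of_injective _ Sum.inr_injective, Finset.card_univ,
    Fintype.card_fin]

lemma imgR_inter_imgL (r : ℕ) :
    (Finset.univ.image Sum.inr : Finset (Fin r ⊕ Fin r)) ∩ Finset.univ.image Sum.inl
      = ∅ := by
  ext c; cases c <;> simp

lemma costOf_eq {r : ℕ} (cost : Fin r ⊕ Fin r → ℚ)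
    (hcost : ∀ c, cost c = Sum.elim (fun _ => 1 / (r : ℚ)) (fun _ => 1 / (r : ℚ) ^ 3) c)
    (W' : Finset (Fin r ⊕ Fin r)) :
    costOf cost W' = ((Finset.univ.image Sum.inl ∩ W').card : ℝ) * (1 / (r : ℝ))
      + ((Finset.univ.image Sum.inr ∩ W').card : ℝ) * (1 / (r : ℝ) ^ 3) := by
  unfold costOf
  rw [← Finset.sum_filter_add_sum_filter_not W' (fun c => c.isLeft = true)]
  have hL : ∑ c ∈ W'.filter (fun c => c.isLeft = true), ((cost c : ℝ))
      = ((W'.filter (fun c => c.isLeft = true)).card : ℝ) * (1 / (r : ℝ)) := by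
    rw [Finset.sum_congr rfl (fun c hc => ?_), Finset.sum_const, nsmul_eq_mul]
    obtain ⟨x, rfl⟩ := Sum.isLeft_iff.mp (Finset.mem_filter.mp hc).2
    rw [hcost]; simp
  have hfilter : W'.filter (fun c => ¬ c.isLeft = true)
      = W'.filter (fun c => c.isRight = true) := by
    apply Finset.filter_congr; intro c _; simp [Sum.not_isLeft]
  have hR : ∑ c ∈ W'.filter (fun c => ¬ c.isLeft = true), ((cost c : ℝ))
      = ((W'.filter (fun c => c.isRight = true)).card : ℝ) * (1 / (r : ℝ) ^ 3) := by
    rw [hfilter, Finset.sum_congr rfl (fun c hc => ?_), Finset.sum_const, nsmul_eq_mul]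
    obtain ⟨x, rfl⟩ := Sum.isRight_iff.mp (Finset.mem_filter.mp hc).2
    rw [hcost]; simp
  rw [hL, hR, imgL_inter, imgR_inter]

lemma filter_not_lt (n : ℕ) (hn : 0 < n) :
    (Finset.univ.filter (fun i : Fin n => ¬ (i : ℕ) < n - 1))
      = {(⟨n - 1, by omega⟩ : Fin n)} := by
  ext i
  simp [Fin.ext_iff]
  have := i.isLt
  omega

lemma card_filter_lt (n : ℕ) (hn : 0 < n) :
    (Finset.univ.filter (fun i : Fin n => (i : ℕ) < n - 1)).card = n - 1 := by
  have h := Finset.card_filter_add_card_filter_not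
    (s := (Finset.univ : Finset (Fin n))) (p := fun i : Fin n => (i : ℕ) < n - 1)
  rw [filter_not_lt n hn, Finset.card_singleton, Finset.card_univ, Fintype.card_fin] at h
  omega

lemma PAV_eq {r : ℕ} (hr : 2 ≤ r)
    (A : Fin (r ^ 2) → Finset (Fin r ⊕ Fin r))
    (hA : ∀ i, A i = if (i : ℕ) < r ^ 2 - 1
      then Finset.univ.image Sum.inl else Finset.univ.image Sum.inr)
    (W' : Finset (Fin r ⊕ Fin r)) :
    PAVscore A W' = ((r ^ 2 - 1 : ℕ) : ℝ) * harm ((Finset.univ.image Sum.inl ∩ W').card)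
      + harm ((Finset.univ.image Sum.inr ∩ W').card) := by
  have hn : 0 < r ^ 2 := by positivity
  unfold PAVscore
  rw [Finset.sum_congr rfl (g := fun i : Fin (r ^ 2) => if (i : ℕ) < r ^ 2 - 1
      then harm ((Finset.univ.image Sum.inl ∩ W').card)
      else harm ((Finset.univ.image Sum.inr ∩ W').card)) (fun i _ => ?_), Finset.sum_ite, Finset.sum_const,
    Finset.sum_const, card_filter_lt _ hn, filter_not_lt _ hn, Finset.card_singleton,
    nsmul_eq_mul, one_nsmul]
  rw [hA i]; split_ifs <;> rfl

end Helpers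

/-- For every r ≥ 2, in the election with r² voters, candidates
a₁,…,a_r (the left summand, cost 1/r each) and b₁,…,b_r (the right summand,
cost 1/r³ each), where voters 0,…,r²−2 approve all the a's and the last voter
approves all the b's, the outcome W = {a₁,…,a_r} has maximal PAV score among
feasible outcomes, yet the singleton group of the last voter is {b₁,…,b_r}-cohesive
while the last voter approves no member of W; hence W fails EJR. -/
theorem PAV_fails_EJR (r : ℕ) (hr : 2 ≤ r)
    (A : Fin (r ^ 2) → Finset (Fin r ⊕ Fin r))
    (hA : ∀ i, A i = if (i : ℕ) < r ^ 2 - 1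
      then Finset.univ.image Sum.inl else Finset.univ.image Sum.inr)
    (cost : Fin r ⊕ Fin r → ℚ)
    (hcost : ∀ c, cost c = Sum.elim (fun _ => 1 / (r : ℚ)) (fun _ => 1 / (r : ℚ) ^ 3) c)
    (W : Finset (Fin r ⊕ Fin r)) (hW : W = Finset.univ.image Sum.inl)
    (S : Finset (Fin (r ^ 2))) (hS : S = Finset.univ.filter (fun i : Fin (r ^ 2) => r ^ 2 - 1 ≤ (i : ℕ)))
    (T : Finset (Fin r ⊕ Fin r)) (hT : T = Finset.univ.image Sum.inr) :
    feasible cost W ∧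
    (∀ W' : Finset (Fin r ⊕ Fin r), feasible cost W' → PAVscore A W' ≤ PAVscore A W) ∧
    (S.Nonempty ∧ costOf cost T * (Fintype.card (Fin (r ^ 2)) : ℝ) ≤ (S.card : ℝ) ∧
      ∀ i ∈ S, T ⊆ A i) ∧
    (∀ i ∈ S, (A i ∩ W).card = 0 ∧ (A i ∩ W).card < r) ∧
    ¬ approvalEJR cost A W := by
  have hr1 : 1 ≤ r := by omega
  have hn : 0 < r ^ 2 := by positivity
  have hrR : (0 : ℝ) < (r : ℝ) := by exact_mod_cast (by omega : 0 < r)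
  -- basic facts about W
  have hWL : ((Finset.univ.image Sum.inl : Finset (Fin r ⊕ Fin r)) ∩ W).card = r := by
    rw [hW, Finset.inter_self, card_imgL]
  have hWR : ((Finset.univ.image Sum.inr : Finset (Fin r ⊕ Fin r)) ∩ W).card = 0 := by
    rw [hW, imgR_inter_imgL, Finset.card_empty]
  have hcostW : costOf cost W = 1 := by
    rw [costOf_eq cost hcost, hWL, hWR]
    push_cast
    field_simp
    ring
  have feasW : feasible cost W := le_of_eq hcostW
  -- PAV score of W
  have hscoreW : PAVscore A W = ((r ^ 2 - 1 : ℕ) : ℝ) * harm r := by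
    rw [PAV_eq hr A hA, hWL, hWR]
    simp [harm]
  -- S is a singleton
  have hSsing : S = {(⟨r ^ 2 - 1, by omega⟩ : Fin (r ^ 2))} := by
    rw [hS, ← filter_not_lt (r ^ 2) hn]
    apply Finset.filter_congr
    intro i _
    simp [Nat.not_lt]
  have hScard : S.card = 1 := by rw [hSsing, Finset.card_singleton]
  have hSne : S.Nonempty := by rw [hSsing]; exact Finset.singleton_nonempty _
  -- cost of T
  have hTL : ((Finset.univ.image Sum.inl : Finset (Fin r ⊕ Fin r)) ∩ T).card = 0 := by
    rw [hT, Finset.inter_comm, imgR_inter_imgL, Finset.card_empty]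
  have hTR : ((Finset.univ.image Sum.inr : Finset (Fin r ⊕ Fin r)) ∩ T).card = r := by
    rw [hT, Finset.inter_self, card_imgR]
  have hcostT : costOf cost T = (r : ℝ) * (1 / (r : ℝ) ^ 3) := by
    rw [costOf_eq cost hcost, hTL, hTR]
    push_cast
    ring
  have hcohT : costOf cost T * (Fintype.card (Fin (r ^ 2)) : ℝ) ≤ (S.card : ℝ) := by
    rw [hcostT, hScard, Fintype.card_fin]
    push_cast
    rw [show (r : ℝ) * (1 / (r : ℝ) ^ 3) * ((r : ℝ) ^ 2) = 1 by field_simp]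
  -- A i = T for i in S
  have hAiS : ∀ i ∈ S, A i = Finset.univ.image Sum.inr := by
    intro i hi
    rw [hS, Finset.mem_filter] at hi
    rw [hA i, if_neg (by omega)]
  refine ⟨feasW, ?_, ⟨hSne, hcohT, ?_⟩, ?_, ?_⟩
  · -- PAV maximality
    intro W' hW'
    rw [PAV_eq hr A hA, hscoreW]
    set kL := ((Finset.univ.image Sum.inl : Finset (Fin r ⊕ Fin r)) ∩ W').card with hkL
    set kR := ((Finset.univ.image Sum.inr : Finset (Fin r ⊕ Fin r)) ∩ W').card with hkR
    have hkLr : kL ≤ r := by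
      calc kL ≤ (Finset.univ.image Sum.inl : Finset (Fin r ⊕ Fin r)).card :=
            Finset.card_le_card Finset.inter_subset_left
        _ = r := card_imgL r
    have hkRr : kR ≤ r := by
      calc kR ≤ (Finset.univ.image Sum.inr : Finset (Fin r ⊕ Fin r)).card :=
            Finset.card_le_card Finset.inter_subset_left
        _ = r := card_imgR r
    have hfe : (kL : ℝ) * (1 / (r : ℝ)) + (kR : ℝ) * (1 / (r : ℝ) ^ 3) ≤ 1 := by
      have := hW'
      rwa [feasible, costOf_eq cost hcost] at this
    by_cases h : kL = r
    · have hone : (r : ℝ) * (1 / (r : ℝ)) = 1 := by field_simp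
      have hp : (0 : ℝ) < 1 / (r : ℝ) ^ 3 := by positivity
      have hkR0 : (kR : ℝ) ≤ 0 := by
        rw [h, hone] at hfe
        nlinarith [Nat.cast_nonneg (α := ℝ) kR]
      have hkR0' : kR = 0 := by
        have h0 : (kR : ℝ) = 0 := le_antisymm hkR0 (Nat.cast_nonneg kR)
        exact_mod_cast h0
      rw [h, hkR0']
      simp [harm]
    · exact key_ineq r kL kR hr (by omega) hkRr
  · -- T ⊆ A i for i ∈ S
    intro i hi
    rw [hAiS i hi, hT]
  · -- intersection empty
    intro i hi
    have : (A i ∩ W).card = 0 := by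
      rw [hAiS i hi, hW, imgR_inter_imgL, Finset.card_empty]
    exact ⟨this, by omega⟩
  · -- not EJR
    intro hEJR
    obtain ⟨i, hi, hcard⟩ := hEJR S T hSne hcohT (fun i hi => by rw [hAiS i hi, hT])
    have h0 : (A i ∩ W).card = 0 := by
      rw [hAiS i hi, hW, imgR_inter_imgL, Finset.card_empty]
    have hTr : T.card = r := by rw [hT, card_imgR]
    omega
end

section
/- There is a PB election with an empty core: let N = {1,…,6}, C = {c_1,…,c_6} with cost(c_j) = 1/3 for every j, and let the utility functions satisfy u_1(c_1) > u_1(c_2) > 0, u_2(c_2) > u_2(c_3) > 0, u_3(c_3) > u_3(c_1) > 0, u_4(c_4) > u_4(c_5) > 0, u_5(c_5) > u_5(c_6) > 0, u_6(c_6) > u_6(c_4) > 0, with all other utility values equal to 0. Then for any such utilities, no feasible outcome W is in the core. -/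
open Finset

lemma util_two (u : Fin 6 → Fin 6 → ℝ) (i a b : Fin 6) (hab : a ≠ b)
    (hz : ∀ c, c ≠ a → c ≠ b → u i c = 0) (W : Finset (Fin 6)) :
    util u i W = (if a ∈ W then u i a else 0) + (if b ∈ W then u i b else 0) := by
  unfold util
  have h : ∀ c ∈ W, u i c = (if c = a then u i a else 0) + (if c = b then u i b else 0) := by
    intro c _
    by_cases h1 : c = a
    · subst h1; simp [hab]
    · by_cases h2 : c = b
      · subst h2; simp [h1]
      · simp [h1, h2, hz c h1 h2]
  rw [Finset.sum_congr rfl h, Finset.sum_add_distrib, Finset.sum_ite_eq' W a,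
    Finset.sum_ite_eq' W b]

lemma triangle_block (u : Fin 6 → Fin 6 → ℝ) (cost : Fin 6 → ℚ) (W : Finset (Fin 6))
    (i0 i1 i2 c0 c1 c2 : Fin 6)
    (hi01 : i0 ≠ i1) (hi12 : i1 ≠ i2) (hi20 : i2 ≠ i0)
    (hu0 : u i0 c0 > u i0 c1 ∧ u i0 c1 > 0)
    (hu1 : u i1 c1 > u i1 c2 ∧ u i1 c2 > 0)
    (hu2 : u i2 c2 > u i2 c0 ∧ u i2 c0 > 0)
    (hz0 : ∀ c, c ≠ c0 → c ≠ c1 → u i0 c = 0)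
    (hz1 : ∀ c, c ≠ c1 → c ≠ c2 → u i1 c = 0)
    (hz2 : ∀ c, c ≠ c2 → c ≠ c0 → u i2 c = 0)
    (hcost : ∀ c, cost c = 1/3)
    (hle : ¬(c0 ∈ W ∧ c1 ∈ W) ∧ ¬(c1 ∈ W ∧ c2 ∈ W) ∧ ¬(c0 ∈ W ∧ c2 ∈ W))
    (hcore : inCore cost u W) : False := by
  have hone : ∀ (a b : Fin 6), a ≠ b → ∀ t : Fin 6,
      ∃ i ∈ ({a, b} : Finset (Fin 6)), u i t ≤ util u i W := by
    intro a b hab t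
    have hc : costOf cost ({t} : Finset (Fin 6)) * (Fintype.card (Fin 6) : ℝ)
        ≤ (({a, b} : Finset (Fin 6)).card : ℝ) := by
      rw [Finset.card_pair hab]
      simp [costOf, hcost]
      norm_num
    have := hcore {a, b} {t} ⟨a, by simp⟩ hc
    simpa [util] using this
  have U0 := util_two u i0 c0 c1 (by intro h; rw [h] at hu0; linarith [hu0.1, hu0.2])
    hz0 W
  have U1 := util_two u i1 c1 c2 (by intro h; rw [h] at hu1; linarith [hu1.1, hu1.2])
    hz1 W
  have U2 := util_two u i2 c2 c0 (by intro h; rw [h] at hu2; linarith [hu2.1, hu2.2])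
    hz2 W
  by_cases w0 : c0 ∈ W <;> by_cases w1 : c1 ∈ W <;> by_cases w2 : c2 ∈ W
  · exact hle.1 ⟨w0, w1⟩
  · exact hle.1 ⟨w0, w1⟩
  · exact hle.2.2 ⟨w0, w2⟩
  · -- only c0 in W : blocking pair {i1, i2} with {c2}
    obtain ⟨i, hiS, hl⟩ := hone i1 i2 hi12 c2
    rw [Finset.mem_insert, Finset.mem_singleton] at hiS
    rcases hiS with rfl | rfl
    · rw [U1] at hl; simp [w1, w2] at hl; linarith [hu1.2]
    · rw [U2] at hl; simp [w0, w2] at hl; linarith [hu2.1]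
  · exact hle.2.1 ⟨w1, w2⟩
  · -- only c1 in W : blocking pair {i2, i0} with {c0}
    obtain ⟨i, hiS, hl⟩ := hone i2 i0 hi20 c0
    rw [Finset.mem_insert, Finset.mem_singleton] at hiS
    rcases hiS with rfl | rfl
    · rw [U2] at hl; simp [w0, w2] at hl; linarith [hu2.2]
    · rw [U0] at hl; simp [w0, w1] at hl; linarith [hu0.1]
  · -- only c2 in W : blocking pair {i0, i1} with {c1}
    obtain ⟨i, hiS, hl⟩ := hone i0 i1 hi01 c1
    rw [Finset.mem_insert, Finset.mem_singleton] at hiS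
    rcases hiS with rfl | rfl
    · rw [U0] at hl; simp [w0, w1] at hl; linarith [hu0.2]
    · rw [U1] at hl; simp [w1, w2] at hl; linarith [hu1.1]
  · -- nothing in W : blocking pair {i0, i1} with {c1}
    obtain ⟨i, hiS, hl⟩ := hone i0 i1 hi01 c1
    rw [Finset.mem_insert, Finset.mem_singleton] at hiS
    rcases hiS with rfl | rfl
    · rw [U0] at hl; simp [w0, w1] at hl; linarith [hu0.2]
    · rw [U1] at hl; simp [w1, w2] at hl; linarith [hu1.2]

/-- A PB election with an empty core: 6 voters, 6 candidates of
cost 1/3 each, with the cyclic utility structure described in the paper.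
No feasible outcome is in the core. -/
theorem core_can_be_empty
    (u : Fin 6 → Fin 6 → ℝ)
    (hrange : ∀ i c, 0 ≤ u i c ∧ u i c ≤ 1)
    (h1 : u 0 0 > u 0 1 ∧ u 0 1 > 0)
    (h2 : u 1 1 > u 1 2 ∧ u 1 2 > 0)
    (h3 : u 2 2 > u 2 0 ∧ u 2 0 > 0)
    (h4 : u 3 3 > u 3 4 ∧ u 3 4 > 0)
    (h5 : u 4 4 > u 4 5 ∧ u 4 5 > 0)
    (h6 : u 5 5 > u 5 3 ∧ u 5 3 > 0)
    (hzero : ∀ i c : Fin 6, ((i : ℕ), (c : ℕ)) ∉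
      ({(0,0), (0,1), (1,1), (1,2), (2,2), (2,0),
        (3,3), (3,4), (4,4), (4,5), (5,5), (5,3)} : Set (ℕ × ℕ)) → u i c = 0)
    (cost : Fin 6 → ℚ) (hcost : ∀ c, cost c = 1/3) :
    ¬ ∃ W : Finset (Fin 6), feasible cost W ∧ inCore cost u W := by
  rintro ⟨W, hfeas, hcore⟩
  -- zero-utility facts for each voter
  have hz0 : ∀ c : Fin 6, c ≠ 0 → c ≠ 1 → u 0 c = 0 := by
    intro c hA hB; apply hzero
    fin_cases c <;>
      first
        | exact absurd rfl hA
        | exact absurd rfl hB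
        | (simp only [Set.mem_insert_iff, Set.mem_singleton_iff]; decide)
  have hz1 : ∀ c : Fin 6, c ≠ 1 → c ≠ 2 → u 1 c = 0 := by
    intro c hA hB; apply hzero
    fin_cases c <;>
      first
        | exact absurd rfl hA
        | exact absurd rfl hB
        | (simp only [Set.mem_insert_iff, Set.mem_singleton_iff]; decide)
  have hz2 : ∀ c : Fin 6, c ≠ 2 → c ≠ 0 → u 2 c = 0 := by
    intro c hA hB; apply hzero
    fin_cases c <;>
      first
        | exact absurd rfl hA
        | exact absurd rfl hB
        | (simp only [Set.mem_insert_iff, Set.mem_singleton_iff]; decide)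
  have hz3 : ∀ c : Fin 6, c ≠ 3 → c ≠ 4 → u 3 c = 0 := by
    intro c hA hB; apply hzero
    fin_cases c <;>
      first
        | exact absurd rfl hA
        | exact absurd rfl hB
        | (simp only [Set.mem_insert_iff, Set.mem_singleton_iff]; decide)
  have hz4 : ∀ c : Fin 6, c ≠ 4 → c ≠ 5 → u 4 c = 0 := by
    intro c hA hB; apply hzero
    fin_cases c <;>
      first
        | exact absurd rfl hA
        | exact absurd rfl hB
        | (simp only [Set.mem_insert_iff, Set.mem_singleton_iff]; decide)
  have hz5 : ∀ c : Fin 6, c ≠ 5 → c ≠ 3 → u 5 c = 0 := by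
    intro c hA hB; apply hzero
    fin_cases c <;>
      first
        | exact absurd rfl hA
        | exact absurd rfl hB
        | (simp only [Set.mem_insert_iff, Set.mem_singleton_iff]; decide)
  -- W has at most 3 candidates
  have hWcost : costOf cost W = (W.card : ℝ) * (1/3 : ℝ) := by
    simp [costOf, hcost]
  have hW3 : W.card ≤ 3 := by
    have : (W.card : ℝ) ≤ 3 := by
      have := hfeas
      rw [feasible, hWcost] at this
      linarith
    exact_mod_cast this
  -- split into two triangles
  have hdisj : Disjoint (W ∩ ({0,1,2} : Finset (Fin 6))) (W ∩ ({3,4,5} : Finset (Fin 6))) := by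
    have : Disjoint ({0,1,2} : Finset (Fin 6)) ({3,4,5} : Finset (Fin 6)) := by decide
    exact this.mono (Finset.inter_subset_right) (Finset.inter_subset_right)
  have hunion : (W ∩ ({0,1,2} : Finset (Fin 6))) ∪ (W ∩ ({3,4,5} : Finset (Fin 6))) = W := by
    rw [← Finset.inter_union_distrib_left]
    have : (({0,1,2} : Finset (Fin 6)) ∪ ({3,4,5} : Finset (Fin 6))) = Finset.univ := by decide
    rw [this, Finset.inter_univ]
  have hsum : (W ∩ ({0,1,2} : Finset (Fin 6))).card + (W ∩ ({3,4,5} : Finset (Fin 6))).card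
      = W.card := by
    rw [← Finset.card_union_of_disjoint hdisj, hunion]
  have hkey : (W ∩ ({0,1,2} : Finset (Fin 6))).card ≤ 1 ∨
      (W ∩ ({3,4,5} : Finset (Fin 6))).card ≤ 1 := by omega
  have hpair : ∀ (a b : Fin 6) (A : Finset (Fin 6)), a ≠ b → a ∈ A → b ∈ A →
      a ∈ W → b ∈ W → 2 ≤ (W ∩ A).card := by
    intro a b A hab ha hb haW hbW
    have hsub : ({a, b} : Finset (Fin 6)) ⊆ W ∩ A := by
      intro x hx
      rw [Finset.mem_insert, Finset.mem_singleton] at hx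
      rcases hx with rfl | rfl <;> exact Finset.mem_inter.mpr ⟨by assumption, by assumption⟩
    calc 2 = ({a, b} : Finset (Fin 6)).card := (Finset.card_pair hab).symm
      _ ≤ (W ∩ A).card := Finset.card_le_card hsub
  rcases hkey with hk | hk
  · refine triangle_block u cost W 0 1 2 0 1 2 (by decide) (by decide) (by decide)
      h1 h2 h3 hz0 hz1 hz2 hcost ⟨?_, ?_, ?_⟩ hcore
    · rintro ⟨p, q⟩
      have := hpair 0 1 {0,1,2} (by decide) (by decide) (by decide) p q; omega
    · rintro ⟨p, q⟩
      have := hpair 1 2 {0,1,2} (by decide) (by decide) (by decide) p q; omega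
    · rintro ⟨p, q⟩
      have := hpair 0 2 {0,1,2} (by decide) (by decide) (by decide) p q; omega
  · refine triangle_block u cost W 3 4 5 3 4 5 (by decide) (by decide) (by decide)
      h4 h5 h6 hz3 hz4 hz5 hcost ⟨?_, ?_, ?_⟩ hcore
    · rintro ⟨p, q⟩
      have := hpair 3 4 {3,4,5} (by decide) (by decide) (by decide) p q; omega
    · rintro ⟨p, q⟩
      have := hpair 4 5 {3,4,5} (by decide) (by decide) (by decide) p q; omega
    · rintro ⟨p, q⟩
      have := hpair 3 5 {3,4,5} (by decide) (by decide) (by decide) p q; omega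
end

section
/- Every outcome W produced by an execution of Rule X is priceable; in fact W, together with the payments made during the execution, is supported by a price system with initial budget b = 1. -/
open Finset

section RXAux

variable {V C : Type*} [Fintype V] [DecidableEq V] [Fintype C] [DecidableEq C]

/-- Invariant maintained by Rule X executions. -/
def RXInv (cost : C → ℚ) (u : V → C → ℝ) (s : Finset C × (V → C → ℝ)) : Prop :=
  (∀ i c, 0 ≤ s.2 i c) ∧ (∀ i c, u i c = 0 → s.2 i c = 0) ∧
  (∀ i, totalPaid s.2 i ≤ 1 / (Fintype.card V : ℝ)) ∧
  (∀ c ∉ s.1, ∀ i, s.2 i c = 0) ∧ (∀ c ∈ s.1, ∑ i, s.2 i c = (cost c : ℝ))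

lemma RXInv_init (cost : C → ℚ) (u : V → C → ℝ) :
    RXInv cost u ((∅ : Finset C), fun (_ : V) (_ : C) => (0 : ℝ)) := by
  refine ⟨fun i c => le_refl 0, fun i c _ => rfl, fun i => ?_, fun c _ i => rfl, fun c hc => by
    simp at hc⟩
  simp [totalPaid]

lemma RXInv_step {cost : C → ℚ} {u : V → C → ℝ} (hu : ∀ i c, 0 ≤ u i c)
    {s t : Finset C × (V → C → ℝ)} (h : RuleXStep cost u s t) (hs : RXInv cost u s) :
    RXInv cost u t := by
  obtain ⟨c, hc, ρ, hρ, haff, _, ht⟩ := h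
  obtain ⟨h1, h2, h3, h4, h5⟩ := hs
  set n : ℝ := (Fintype.card V : ℝ)
  have hr : ∀ i, 0 ≤ 1 / n - totalPaid s.2 i := fun i => sub_nonneg.2 (h3 i)
  set m : V → ℝ := fun i => min (1 / n - totalPaid s.2 i) (u i c * ρ) with hm
  have hm0 : ∀ i, 0 ≤ m i := fun i => le_min (hr i) (mul_nonneg (hu i c) hρ)
  have hfun : ∀ i, (fun c' => if c' = c then m i else s.2 i c') = Function.update (s.2 i) c (m i) := by
    intro i; funext c'; simp [Function.update_apply]
  have htot : ∀ i, totalPaid t.2 i = m i + totalPaid s.2 i := by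
    intro i
    rw [ht]
    show (∑ c', if c' = c then m i else s.2 i c') = _
    rw [hfun i, Finset.sum_update_of_mem (Finset.mem_univ c),
      Finset.sdiff_singleton_eq_erase, Finset.sum_erase _ (h4 c hc i), totalPaid]
  subst ht
  refine ⟨fun i c' => ?_, fun i c' hu0 => ?_, fun i => ?_, fun c' hc' i => ?_, fun c' hc' => ?_⟩
  · dsimp only
    by_cases hcc : c' = c
    · rw [if_pos hcc]; exact hm0 i
    · rw [if_neg hcc]; exact h1 i c'
  · dsimp only
    by_cases hcc : c' = c
    · subst hcc
      rw [if_pos rfl]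
      show min (1 / n - totalPaid s.2 i) (u i c' * ρ) = 0
      rw [hu0, zero_mul]
      exact min_eq_right (hr i)
    · rw [if_neg hcc]; exact h2 i c' hu0
  · rw [htot i]
    have hle : m i ≤ 1 / n - totalPaid s.2 i := min_le_left _ _
    linarith
  · simp only [Finset.mem_insert, not_or] at hc'
    dsimp only
    rw [if_neg hc'.1]
    exact h4 c' hc'.2 i
  · rcases Finset.mem_insert.1 hc' with rfl | hmem
    · dsimp only
      rw [Finset.sum_congr rfl (fun i _ => if_pos rfl)]
      exact haff
    · have hne : c' ≠ c := fun h => hc (h ▸ hmem)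
      dsimp only
      rw [Finset.sum_congr rfl (fun i _ => if_neg hne)]
      exact h5 c' hmem

lemma RXInv_reach {cost : C → ℚ} {u : V → C → ℝ} (hu : ∀ i c, 0 ≤ u i c)
    {s t : Finset C × (V → C → ℝ)} (h : Relation.ReflTransGen (RuleXStep cost u) s t)
    (hs : RXInv cost u s) : RXInv cost u t := by
  induction h with
  | refl => exact hs
  | tail _ hstep ih => exact RXInv_step hu hstep ih

end RXAux

/-- Every Rule X outcome is priceable; in fact, together with the
payments made during the execution, it is supported by a price system with
initial budget b = 1. -/
theorem ruleX_priceable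
    {V C : Type*} [Fintype V] [DecidableEq V] [Fintype C] [DecidableEq C]
    (cost : C → ℚ) (u : V → C → ℝ) (hvalid : validPB cost u)
    (W : Finset C) (pay : V → C → ℝ)
    (hreach : Relation.ReflTransGen (RuleXStep cost u) (∅, fun _ _ => 0) (W, pay))
    (hterm : RuleXTerminal cost u (W, pay)) :
    supports cost u 1 pay W ∧ priceable cost u W := by
  classical
  have hu : ∀ i c, 0 ≤ u i c := fun i c => (hvalid.2.1 i c).1
  have hinv : RXInv cost u (W, pay) := RXInv_reach hu hreach (RXInv_init cost u)
  obtain ⟨h1, h2, h3, h4, h5⟩ := hinv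
  set n : ℝ := (Fintype.card V : ℝ)
  have hsupp : supports cost u 1 pay W := by
    refine ⟨le_refl 1, h1, h2, fun i => ?_, h5, fun c hcW => ?_, fun c hcW => ?_⟩
    · exact h3 i
    · exact Finset.sum_eq_zero fun i _ => h4 c hcW i
    · -- C5
      have hWsum : ∀ i, (∑ c' ∈ W, pay i c') = totalPaid pay i := by
        intro i
        rw [totalPaid]
        exact Finset.sum_subset (Finset.subset_univ W)
          (fun c' _ hc' => h4 c' hc' i)
      have hcost : (0 : ℝ) < (cost c : ℝ) := by exact_mod_cast hvalid.1 c
      by_contra hcon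
      push_neg at hcon
      set r : V → ℝ := fun i => 1 / n - totalPaid pay i with hrdef
      have hr0 : ∀ i, 0 ≤ r i := fun i => sub_nonneg.2 (h3 i)
      have hcon' : (cost c : ℝ) < ∑ i ∈ Finset.univ.filter (fun i => 0 < u i c), r i := by
        refine lt_of_lt_of_le hcon (le_of_eq ?_)
        refine Finset.sum_congr rfl fun i _ => ?_
        rw [hWsum i]
      set F := Finset.univ.filter (fun i : V => 0 < u i c) with hF
      have hFne : F.Nonempty := by
        by_contra hF0
        rw [Finset.not_nonempty_iff_eq_empty] at hF0
        rw [hF0, Finset.sum_empty] at hcon'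
        linarith
      set R : ℝ := F.sup' hFne (fun i => r i / u i c) with hR
      have hRpos : 0 ≤ R := by
        obtain ⟨i0, hi0⟩ := hFne
        have hu0 : 0 < u i0 c := (Finset.mem_filter.1 hi0).2
        exact le_trans (div_nonneg (hr0 i0) (le_of_lt hu0))
          (Finset.le_sup' (fun j => r j / u j c) hi0)
      set f : ℝ → ℝ := fun ρ => ∑ i, min (r i) (u i c * ρ) with hfdef
      have hf0 : f 0 = 0 := by
        simp only [hfdef, mul_zero]
        exact Finset.sum_eq_zero fun i _ => min_eq_right (hr0 i)
      have hfR : f R = ∑ i ∈ F, r i := by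
        have hterm' : ∀ i : V, min (r i) (u i c * R) = if 0 < u i c then r i else 0 := by
          intro i
          by_cases hui : 0 < u i c
          · rw [if_pos hui]
            refine min_eq_left ?_
            have hle : r i / u i c ≤ R :=
              Finset.le_sup' (fun j => r j / u j c)
                (Finset.mem_filter.2 ⟨Finset.mem_univ i, hui⟩)
            calc r i = (r i / u i c) * u i c := by field_simp
              _ ≤ R * u i c := mul_le_mul_of_nonneg_right hle hui.le
              _ = u i c * R := mul_comm _ _
          · rw [if_neg hui]
            have hz : u i c = 0 := le_antisymm (not_lt.1 hui) (hu i c)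
            rw [hz, zero_mul]
            exact min_eq_right (hr0 i)
        calc f R = ∑ i : V, if 0 < u i c then r i else 0 :=
              Finset.sum_congr rfl (fun i _ => hterm' i)
          _ = ∑ i ∈ F, r i := (Finset.sum_filter _ _).symm
      have hcont : Continuous f := by
        apply continuous_finset_sum
        intro i _
        exact continuous_const.min (continuous_const.mul continuous_id)
      have hmem : (cost c : ℝ) ∈ Set.Icc (f 0) (f R) := by
        constructor
        · rw [hf0]; exact le_of_lt hcost
        · rw [hfR]; exact le_of_lt hcon'
      obtain ⟨ρ, hρmem, hρeq⟩ := intermediate_value_Icc hRpos hcont.continuousOn hmem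
      exact hterm ρ hρmem.1 c hcW hρeq
  exact ⟨hsupp, 1, pay, hsupp⟩
end
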